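/- arXiv:2503.00911 — 2 statements merged into one kernel-verified Lean document; each statement's English description precedes it below -/
import Mathlib

section
/- Let K be a nonarchimedean local field, D₁ and D₂ maximal orders in M₂(K) with d(D₁, D₂) = n, E = D₁ ∩ D₂ the corresponding Eichler order, and r ≥ 0 an integer. Then O_K·1 + π_K^r·E equals the intersection of all maximal orders D' for which there exists a maximal order D with d(D₁,D) + d(D,D₂) = n and d(D, D') ≤ r (i.e. the intersection of all maximal orders at distance at most r from the geodesic segment between D₁ and D₂). -/
noncomputable section

/-- The algebra of 2×2 matrices over `K`. -/
abbrev M2 (K : Type) : Type := Matrix (Fin 2) (Fin 2) K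

section BasicDefs

variable (O : Type) [CommRing O] (K : Type) [Field K] [Algebra O K]

/-- An `O`-order in `M₂(K)`: a subring containing `O·1` (equivalently, an
`O`-subalgebra) which is finitely generated as an `O`-module. -/
def IsOrder (R : Subalgebra O (M2 K)) : Prop :=
  (Subalgebra.toSubmodule R).FG

/-- A full `O`-order in `M₂(K)`: an order which moreover spans `M₂(K)` over `K`. -/
def IsFullOrder (R : Subalgebra O (M2 K)) : Prop :=
  (Subalgebra.toSubmodule R).FG ∧ Submodule.span K (R : Set (M2 K)) = ⊤

/-- A maximal order: a full order which is maximal under inclusion. -/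
def IsMaximalOrder (D : Subalgebra O (M2 K)) : Prop :=
  IsFullOrder O K D ∧
    ∀ D' : Subalgebra O (M2 K), IsFullOrder O K D' → D ≤ D' → D' = D

/-- The standard maximal order `M₂(O_K)`, consisting of all matrices with
integral entries. -/
def stdOrder : Subalgebra O (M2 K) where
  carrier := {x : M2 K | ∀ i j, x i j ∈ (algebraMap O K).range}
  mul_mem' := by
    intro a b ha hb i j
    rw [Matrix.mul_apply]
    exact sum_mem fun k _ => mul_mem (ha i k) (hb k j)
  one_mem' := by
    intro i j
    rw [Matrix.one_apply]
    split_ifs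
    · exact one_mem _
    · exact zero_mem _
  add_mem' := by
    intro a b ha hb i j
    rw [Matrix.add_apply]
    exact add_mem (ha i j) (hb i j)
  zero_mem' := by
    intro i j
    rw [Matrix.zero_apply]
    exact zero_mem _
  algebraMap_mem' := by
    intro r i j
    rw [Matrix.algebraMap_matrix_apply]
    split_ifs
    · exact ⟨r, rfl⟩
    · exact zero_mem _

/-- Conjugate `g·D·g⁻¹` of an order `D` by a unit `g` of `M₂(K)`
(equivalently, by an element of `GL₂(K)`). -/
def conjOrder (g : (M2 K)ˣ) (D : Subalgebra O (M2 K)) : Subalgebra O (M2 K) where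
  carrier := {x : M2 K | (↑g⁻¹ : M2 K) * x * (↑g : M2 K) ∈ D}
  mul_mem' := by
    intro a b ha hb
    have h : (↑g⁻¹ : M2 K) * (a * b) * (↑g : M2 K)
        = ((↑g⁻¹ : M2 K) * a * (↑g : M2 K)) * ((↑g⁻¹ : M2 K) * b * (↑g : M2 K)) := by
      simp only [mul_assoc, Units.mul_inv_cancel_left]
    show (↑g⁻¹ : M2 K) * (a * b) * (↑g : M2 K) ∈ D
    rw [h]
    exact mul_mem ha hb
  one_mem' := by
    show (↑g⁻¹ : M2 K) * 1 * (↑g : M2 K) ∈ D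
    rw [mul_one, Units.inv_mul]
    exact one_mem D
  add_mem' := by
    intro a b ha hb
    show (↑g⁻¹ : M2 K) * (a + b) * (↑g : M2 K) ∈ D
    rw [mul_add, add_mul]
    exact add_mem ha hb
  zero_mem' := by
    show (↑g⁻¹ : M2 K) * 0 * (↑g : M2 K) ∈ D
    rw [mul_zero, zero_mul]
    exact zero_mem D
  algebraMap_mem' := by
    intro r
    show (↑g⁻¹ : M2 K) * algebraMap O (M2 K) r * (↑g : M2 K) ∈ D
    have h : (↑g⁻¹ : M2 K) * algebraMap O (M2 K) r
        = algebraMap O (M2 K) r * (↑g⁻¹ : M2 K) := (Algebra.commutes r _).symm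
    rw [h, mul_assoc, Units.inv_mul, mul_one]
    exact D.algebraMap_mem r

/-- `BTdist O K ϖ n D D'` says that `D` and `D'` are maximal orders at distance
`n` in the Bruhat–Tits tree: there is `g ∈ GL₂(K)` with `D = g·M₂(O_K)·g⁻¹` and
`D' = g·h·M₂(O_K)·h⁻¹·g⁻¹`, where `h = diag(1, ϖ^n)`. -/
def BTdist (ϖ : O) (n : ℕ) (D D' : Subalgebra O (M2 K)) : Prop :=
  ∃ g h : (M2 K)ˣ, (h : M2 K) = Matrix.diagonal ![1, (algebraMap O K ϖ) ^ n] ∧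
    D = conjOrder O K g (stdOrder O K) ∧ D' = conjOrder O K (g * h) (stdOrder O K)

/-- `d(D, D') ≤ r` in the Bruhat–Tits tree. -/
def BTdistLE (ϖ : O) (r : ℕ) (D D' : Subalgebra O (M2 K)) : Prop :=
  ∃ n, n ≤ r ∧ BTdist O K ϖ n D D'

/-- The Gorenstein condition on a full order `R`: `R` admits no non-trivial
expression `R = O_K·1 + I·R'` with `R'` a full order and `I` a proper nonzero
ideal of `O_K`. -/
def GorensteinCond (R : Subalgebra O (M2 K)) : Prop :=
  ¬ ∃ (R' : Subalgebra O (M2 K)) (I : Ideal O), IsFullOrder O K R' ∧ I ≠ ⊥ ∧ I ≠ ⊤ ∧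
      Subalgebra.toSubmodule R
        = Submodule.span O {(1 : M2 K)} ⊔ I • Subalgebra.toSubmodule R'

/-- A Gorenstein order: a full order satisfying the Gorenstein condition. -/
def IsGorenstein (R : Subalgebra O (M2 K)) : Prop :=
  IsFullOrder O K R ∧ GorensteinCond O K R

/-- A Bass order: a full order all of whose (full-order) over-orders are
Gorenstein. -/
def IsBassOrder (B : Subalgebra O (M2 K)) : Prop :=
  IsFullOrder O K B ∧
    ∀ R : Subalgebra O (M2 K), IsFullOrder O K R → B ≤ R → GorensteinCond O K R

/-- `Rg` is the Gorenstein closure of `R`: `Rg` is a Gorenstein full order and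
`R = O_K·1 + I·Rg` for some (nonzero) ideal `I` of `O_K`. -/
def IsGorensteinClosure (R Rg : Subalgebra O (M2 K)) : Prop :=
  IsGorenstein O K Rg ∧ ∃ I : Ideal O, I ≠ ⊥ ∧
    Subalgebra.toSubmodule R
      = Submodule.span O {(1 : M2 K)} ⊔ I • Subalgebra.toSubmodule Rg

/-- An Eichler order: an intersection of two (possibly equal) maximal orders. -/
def IsEichler (E : Subalgebra O (M2 K)) : Prop :=
  ∃ D₁ D₂ : Subalgebra O (M2 K),
    IsMaximalOrder O K D₁ ∧ IsMaximalOrder O K D₂ ∧ E = D₁ ⊓ D₂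

/-- The `O`-module `O_K·1 + ϖ^r·N`. -/
def shrinkMod (ϖ : O) (r : ℕ) (N : Submodule O (M2 K)) : Submodule O (M2 K) :=
  Submodule.span O {(1 : M2 K)} ⊔ Ideal.span {ϖ ^ r} • N

/-- The ring of integers `O_Λ` of a (commutative) subalgebra `Λ ⊆ M₂(K)`:
the set of elements of `Λ` which are integral over `O`. -/
def integralElems (Λ : Subalgebra K (M2 K)) : Set (M2 K) :=
  {x : M2 K | x ∈ Λ ∧ IsIntegral O x}

/-- `π` is a uniformizer of the ring of integers `O_Λ` of `Λ`: it is a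
non-unit of `O_Λ` dividing every non-unit of `O_Λ`. -/
def IsUniformizerOf (Λ : Subalgebra K (M2 K)) (π : M2 K) : Prop :=
  π ∈ integralElems O K Λ ∧ (¬ ∃ y ∈ integralElems O K Λ, π * y = 1) ∧
    ∀ x ∈ integralElems O K Λ,
      (∃ y ∈ integralElems O K Λ, x * y = 1) ∨ ∃ y ∈ integralElems O K Λ, x = π * y

/-- A ghost intersection of maximal orders: there are a finite extension `L/K`
and finitely many maximal `O_L`-orders `D₁, …, D_n` of `M₂(L)` whose
intersection with `M₂(K)` is `R`.  Here `O_L` is the valuation ring of `L`,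
i.e. the integral closure of `O` in `L`. -/
def IsGhostIntersection (R : Subalgebra O (M2 K)) : Prop :=
  ∃ (L : Type) (_ : Field L) (_ : Algebra O L) (_ : Algebra K L) (_ : IsScalarTower O K L),
    FiniteDimensional K L ∧
    ∃ (n : ℕ) (D : Fin (n + 1) → Subalgebra (↥(integralClosure O L)) (M2 L)),
      (∀ i, IsMaximalOrder (↥(integralClosure O L)) L (D i)) ∧
      ∀ x : M2 K, x ∈ R ↔ ∀ i, (algebraMap K L).mapMatrix x ∈ D i

end BasicDefs

section ExtDefs

variable (O : Type) [CommRing O] (K : Type) [Field K] [Algebra O K]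
variable (L : Type) [Field L] [Algebra O L] [Algebra K L] [IsScalarTower O K L]

/-- The image of ϖ in `O_L` remains a uniformizer; for a quadratic extension
`L/K` of local fields this says exactly that `L/K` is unramified. -/
def UniformizerStays (ϖ : O) : Prop :=
  ∃ w : integralClosure O L, (w : L) = algebraMap O L ϖ ∧ Irreducible w

/-- The extension of scalars `D_L = O_L·D` of an order `D ⊆ M₂(K)`, an
`O_L`-order in `M₂(L)`. -/
def extendOrder (D : Subalgebra O (M2 K)) : Subalgebra (↥(integralClosure O L)) (M2 L) :=
  Algebra.adjoin (↥(integralClosure O L))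
    ((fun x : M2 K => (algebraMap K L).mapMatrix x) '' (D : Set (M2 K)))

/-- The extension of scalars `L·Λ ⊆ M₂(L)` of a subalgebra `Λ ⊆ M₂(K)`. -/
def extendAlg (Λ : Subalgebra K (M2 K)) : Subalgebra L (M2 L) :=
  Algebra.adjoin L ((fun x : M2 K => (algebraMap K L).mapMatrix x) '' (Λ : Set (M2 K)))

/-- The integral closure of `O_L` in `L·Λ`, as a subset of `M₂(L)`. -/
def intElemsExt (Λ : Subalgebra K (M2 K)) : Set (M2 L) :=
  {x : M2 L | x ∈ extendAlg K L Λ ∧ IsIntegral (↥(integralClosure O L)) x}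

/-- The intersection `D ∩ M₂(K)` of an `O_L`-order `D ⊆ M₂(L)` with `M₂(K)`,
as an `O`-order in `M₂(K)`. -/
def restrictOrder (D : Subalgebra (↥(integralClosure O L)) (M2 L)) :
    Subalgebra O (M2 K) where
  carrier := {x : M2 K | (algebraMap K L).mapMatrix x ∈ D}
  mul_mem' := by
    intro a b ha hb
    show (algebraMap K L).mapMatrix (a * b) ∈ D
    rw [map_mul]
    exact mul_mem ha hb
  one_mem' := by
    show (algebraMap K L).mapMatrix 1 ∈ D
    rw [map_one]
    exact one_mem D
  add_mem' := by
    intro a b ha hb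
    show (algebraMap K L).mapMatrix (a + b) ∈ D
    rw [map_add]
    exact add_mem ha hb
  zero_mem' := by
    show (algebraMap K L).mapMatrix 0 ∈ D
    rw [map_zero]
    exact zero_mem D
  algebraMap_mem' := by
    intro r
    show (algebraMap K L).mapMatrix (algebraMap O (M2 K) r) ∈ D
    have h : (algebraMap K L).mapMatrix (algebraMap O (M2 K) r)
        = algebraMap (↥(integralClosure O L)) (M2 L)
            ⟨algebraMap O L r, isIntegral_algebraMap⟩ := by
      ext i j
      rw [RingHom.mapMatrix_apply, Matrix.map_apply, Matrix.algebraMap_matrix_apply,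
        Matrix.algebraMap_matrix_apply]
      split_ifs
      · rw [← IsScalarTower.algebraMap_apply]
        rfl
      · rw [map_zero]
    rw [h]
    exact Subalgebra.algebraMap_mem D _

end ExtDefs


namespace Aux

variable {O : Type} [CommRing O] {K : Type} [Field K] [Algebra O K]

lemma mem_conjOrder {g : (M2 K)ˣ} {D : Subalgebra O (M2 K)} {x : M2 K} :
    x ∈ conjOrder O K g D ↔ (↑g⁻¹ : M2 K) * x * (↑g : M2 K) ∈ D := Iff.rfl

lemma conjOrder_mul (g₁ g₂ : (M2 K)ˣ) (D : Subalgebra O (M2 K)) :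
    conjOrder O K (g₁ * g₂) D = conjOrder O K g₁ (conjOrder O K g₂ D) := by
  ext x
  have he : (↑(g₁ * g₂)⁻¹ : M2 K) * x * ↑(g₁ * g₂)
      = (↑g₂⁻¹ : M2 K) * ((↑g₁⁻¹ : M2 K) * x * ↑g₁) * ↑g₂ := by
    simp [Units.val_mul, mul_inv_rev, mul_assoc]
  rw [mem_conjOrder, mem_conjOrder, mem_conjOrder, he]

lemma conjOrder_one (D : Subalgebra O (M2 K)) : conjOrder O K 1 D = D := by
  ext x; simp [mem_conjOrder]

lemma conjOrder_mono {g : (M2 K)ˣ} {D D' : Subalgebra O (M2 K)} (h : D ≤ D') :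
    conjOrder O K g D ≤ conjOrder O K g D' := fun x hx => h hx

lemma conjOrder_inv_conjOrder (g : (M2 K)ˣ) (D : Subalgebra O (M2 K)) :
    conjOrder O K g (conjOrder O K g⁻¹ D) = D := by
  rw [← conjOrder_mul, mul_inv_cancel, conjOrder_one]

end Aux
namespace Aux2
open Aux Matrix

variable {O : Type} [CommRing O] {K : Type} [Field K] [Algebra O K]

lemma mem_stdOrder {x : M2 K} :
    x ∈ stdOrder O K ↔ ∀ i j, x i j ∈ (algebraMap O K).range := Iff.rfl

lemma mapMat_mem_std (A : Matrix (Fin 2) (Fin 2) O) :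
    A.map (algebraMap O K) ∈ stdOrder O K := fun i j => ⟨A i j, rfl⟩

lemma exists_preimage {y : M2 K} (hy : y ∈ stdOrder O K) :
    ∃ Y : Matrix (Fin 2) (Fin 2) O, Y.map (algebraMap O K) = y := by
  refine ⟨fun i j => (hy i j).choose, ?_⟩
  ext i j
  exact (hy i j).choose_spec

/-- the conjugation linear map over O -/
def conjLin (g : (M2 K)ˣ) : M2 K →ₗ[O] M2 K where
  toFun z := (↑g : M2 K) * z * (↑g⁻¹ : M2 K)
  map_add' a b := by noncomm_ring
  map_smul' c a := by
    simp only [RingHom.id_apply, Matrix.smul_mul, Matrix.mul_smul]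

/-- the conjugation linear map over K -/
def conjLinK (g : (M2 K)ˣ) : M2 K →ₗ[K] M2 K where
  toFun z := (↑g : M2 K) * z * (↑g⁻¹ : M2 K)
  map_add' a b := by noncomm_ring
  map_smul' c a := by
    simp only [RingHom.id_apply, Matrix.smul_mul, Matrix.mul_smul]

lemma coe_conjOrder (g : (M2 K)ˣ) (D : Subalgebra O (M2 K)) :
    (conjOrder O K g D : Set (M2 K)) = (conjLin (O := O) g) '' (D : Set (M2 K)) := by
  ext z
  constructor
  · intro hz
    refine ⟨(↑g⁻¹ : M2 K) * z * (↑g : M2 K), hz, ?_⟩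
    simp only [conjLin, LinearMap.coe_mk, AddHom.coe_mk]
    calc (↑g : M2 K) * ((↑g⁻¹ : M2 K) * z * (↑g : M2 K)) * (↑g⁻¹ : M2 K)
        = ((↑g : M2 K) * (↑g⁻¹ : M2 K)) * z * ((↑g : M2 K) * (↑g⁻¹ : M2 K)) := by
          noncomm_ring
      _ = z := by rw [Units.mul_inv]; simp
  · rintro ⟨d, hd, rfl⟩
    show (↑g⁻¹ : M2 K) * ((↑g : M2 K) * d * (↑g⁻¹ : M2 K)) * (↑g : M2 K) ∈ D
    have : (↑g⁻¹ : M2 K) * ((↑g : M2 K) * d * (↑g⁻¹ : M2 K)) * (↑g : M2 K)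
        = ((↑g⁻¹ : M2 K) * (↑g : M2 K)) * d * ((↑g⁻¹ : M2 K) * (↑g : M2 K)) := by
      noncomm_ring
    rw [this, Units.inv_mul]; simpa using hd

lemma toSubmodule_conjOrder (g : (M2 K)ˣ) (D : Subalgebra O (M2 K)) :
    Subalgebra.toSubmodule (conjOrder O K g D)
      = Submodule.map (conjLin (O := O) g) (Subalgebra.toSubmodule D) := by
  apply SetLike.coe_injective
  rw [Submodule.map_coe]
  exact coe_conjOrder g D

lemma isFullOrder_conjOrder {D : Subalgebra O (M2 K)} (g : (M2 K)ˣ)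
    (hD : IsFullOrder O K D) : IsFullOrder O K (conjOrder O K g D) := by
  obtain ⟨hfg, hspan⟩ := hD
  constructor
  · rw [toSubmodule_conjOrder]
    exact Submodule.FG.map _ hfg
  · have hc : (conjOrder O K g D : Set (M2 K)) = (conjLinK (K := K) g) '' (D : Set (M2 K)) :=
      coe_conjOrder g D
    rw [hc, Submodule.span_image, hspan, Submodule.map_top, LinearMap.range_eq_top]
    intro z
    exact ⟨(↑g⁻¹ : M2 K) * z * (↑g : M2 K), by
      simp only [conjLinK, LinearMap.coe_mk, AddHom.coe_mk]
      calc (↑g : M2 K) * ((↑g⁻¹ : M2 K) * z * (↑g : M2 K)) * (↑g⁻¹ : M2 K)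
          = ((↑g : M2 K) * (↑g⁻¹ : M2 K)) * z * ((↑g : M2 K) * (↑g⁻¹ : M2 K)) := by
            noncomm_ring
        _ = z := by rw [Units.mul_inv]; simp⟩

lemma isMaximalOrder_conjOrder {D : Subalgebra O (M2 K)} (g : (M2 K)ˣ)
    (hD : IsMaximalOrder O K D) : IsMaximalOrder O K (conjOrder O K g D) := by
  refine ⟨isFullOrder_conjOrder g hD.1, fun D' hD' hle => ?_⟩
  have h1 : D ≤ conjOrder O K g⁻¹ D' := by
    have := conjOrder_mono (g := g⁻¹) hle
    rwa [← conjOrder_mul, inv_mul_cancel, conjOrder_one] at this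
  have h2 := hD.2 _ (isFullOrder_conjOrder g⁻¹ hD') h1
  calc D' = conjOrder O K g (conjOrder O K g⁻¹ D') := (conjOrder_inv_conjOrder g D').symm
    _ = conjOrder O K g D := by rw [h2]

end Aux2
namespace Aux3
open Aux Aux2 Matrix

variable {O : Type} [CommRing O] {K : Type} [Field K] [Algebra O K]

lemma std_eq_span :
    Subalgebra.toSubmodule (stdOrder O K)
      = Submodule.span O (Set.range fun p : (Fin 2 × Fin 2) =>
          Matrix.single p.1 p.2 (1 : K)) := by
  apply le_antisymm
  · intro x hx
    obtain ⟨A, hA⟩ := exists_preimage (O := O) hx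
    have hx2 : x = ∑ p : Fin 2 × Fin 2, A p.1 p.2 • Matrix.single p.1 p.2 (1 : K) := by
      rw [← hA]
      rw [Fintype.sum_prod_type]
      conv_lhs => rw [matrix_eq_sum_single (A.map (algebraMap O K))]
      refine Finset.sum_congr rfl fun i _ => Finset.sum_congr rfl fun j _ => ?_
      rw [Matrix.smul_single, Matrix.map_apply, Algebra.smul_def, mul_one]
    rw [hx2]
    exact Submodule.sum_mem _ fun p _ => Submodule.smul_mem _ _
      (Submodule.subset_span ⟨p, rfl⟩)
  · rw [Submodule.span_le]
    rintro _ ⟨p, rfl⟩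
    intro i j
    simp only [Matrix.single]
    rw [Matrix.of_apply]
    split_ifs
    · exact ⟨1, map_one _⟩
    · exact ⟨0, map_zero _⟩

lemma std_isFullOrder : IsFullOrder O K (stdOrder O K) := by
  constructor
  · rw [std_eq_span]
    exact Submodule.fg_span (Set.finite_range _)
  · rw [eq_top_iff]
    intro x _
    have hx2 : x = ∑ p : Fin 2 × Fin 2, x p.1 p.2 • Matrix.single p.1 p.2 (1 : K) := by
      rw [Fintype.sum_prod_type]
      conv_lhs => rw [matrix_eq_sum_single x]
      refine Finset.sum_congr rfl fun i _ => Finset.sum_congr rfl fun j _ => ?_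
      rw [Matrix.smul_single, smul_eq_mul, mul_one]
    rw [hx2]
    refine Submodule.sum_mem _ fun p _ => Submodule.smul_mem _ _ (Submodule.subset_span ?_)
    intro i j
    simp only [Matrix.single]
    rw [Matrix.of_apply]
    split_ifs
    · exact ⟨1, map_one _⟩
    · exact ⟨0, map_zero _⟩

variable [IsDomain O] [IsDiscreteValuationRing O] [IsFractionRing O K]

lemma std_isMaximalOrder : IsMaximalOrder O K (stdOrder O K) := by
  refine ⟨std_isFullOrder, fun D' hD' hle => ?_⟩
  have hsub : D' ≤ stdOrder O K := by
    intro x hx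
    intro j k
    -- x j k • 1 ∈ D' and integral
    have hE : ∀ i j : Fin 2, Matrix.single i j (1 : K) ∈ D' := by
      intro i j
      apply hle
      intro a b
      simp only [Matrix.single]
      rw [Matrix.of_apply]
      split_ifs
      · exact ⟨1, map_one _⟩
      · exact ⟨0, map_zero _⟩
    have key : (Matrix.single 0 j (1:K)) * x * (Matrix.single k 0 (1:K))
          + (Matrix.single 1 j (1:K)) * x * (Matrix.single k 1 (1:K))
        = x j k • (1 : M2 K) := by
      ext a b
      simp [Matrix.mul_apply, Matrix.single, Matrix.one_apply, Fin.sum_univ_two,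
        Matrix.smul_apply]
      fin_cases j <;> fin_cases k <;> fin_cases a <;> fin_cases b <;> simp
    have hmem : x j k • (1 : M2 K) ∈ D' := by
      rw [← key]
      exact add_mem (mul_mem (mul_mem (hE 0 j) hx) (hE k 0))
        (mul_mem (mul_mem (hE 1 j) hx) (hE k 1))
    have hint : IsIntegral O (x j k • (1 : M2 K)) :=
      IsIntegral.of_mem_of_fg D' hD'.1 _ hmem
    have hsc : x j k • (1 : M2 K) = algebraMap K (M2 K) (x j k) := by
      rw [Algebra.algebraMap_eq_smul_one]
    rw [hsc] at hint
    have hinj : Function.Injective (algebraMap K (M2 K)) := by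
      intro a b hab
      have := congrArg (fun m : M2 K => m 0 0) hab
      simpa [Algebra.algebraMap_eq_smul_one, Matrix.smul_apply, Matrix.one_apply] using this
    have hint2 : IsIntegral O (x j k) := (isIntegral_algebraMap_iff hinj).mp hint
    obtain ⟨y, hy⟩ := IsIntegrallyClosed.isIntegral_iff.mp hint2
    exact ⟨y, hy⟩
  exact le_antisymm hsub hle

lemma conj_std_isMaximalOrder (g : (M2 K)ˣ) :
    IsMaximalOrder O K (conjOrder O K g (stdOrder O K)) :=
  isMaximalOrder_conjOrder g std_isMaximalOrder

end Aux3
namespace Aux4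
open Aux Aux2 Aux3 Matrix

variable {O : Type} [CommRing O] {K : Type} [Field K] [Algebra O K]

lemma conj_cancel_left (g : (M2 K)ˣ) (z : M2 K) :
    (↑g : M2 K) * ((↑g⁻¹ : M2 K) * z * (↑g : M2 K)) * (↑g⁻¹ : M2 K) = z := by
  calc (↑g : M2 K) * ((↑g⁻¹ : M2 K) * z * (↑g : M2 K)) * (↑g⁻¹ : M2 K)
      = ((↑g : M2 K) * (↑g⁻¹ : M2 K)) * z * ((↑g : M2 K) * (↑g⁻¹ : M2 K)) := by noncomm_ring
    _ = z := by rw [Units.mul_inv]; simp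

lemma conj_cancel_right (g : (M2 K)ˣ) (z : M2 K) :
    (↑g⁻¹ : M2 K) * ((↑g : M2 K) * z * (↑g⁻¹ : M2 K)) * (↑g : M2 K) = z := by
  calc (↑g⁻¹ : M2 K) * ((↑g : M2 K) * z * (↑g⁻¹ : M2 K)) * (↑g : M2 K)
      = ((↑g⁻¹ : M2 K) * (↑g : M2 K)) * z * ((↑g⁻¹ : M2 K) * (↑g : M2 K)) := by noncomm_ring
    _ = z := by rw [Units.inv_mul]; simp

/-- diagonal matrix `diag(1, π^k)` -/
def Hmat (π : K) (k : ℕ) : M2 K := Matrix.diagonal ![1, π ^ k]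

def Hmat' (π : K) (k : ℕ) : M2 K := Matrix.diagonal ![1, (π ^ k)⁻¹]

lemma Hmat_mul_Hmat' {π : K} (hπ : π ≠ 0) (k : ℕ) : Hmat π k * Hmat' π k = 1 := by
  rw [Hmat, Hmat', Matrix.diagonal_mul_diagonal]
  have h2 : (fun i => ![1, π ^ k] i * ![1, (π ^ k)⁻¹] i) = fun _ => (1 : K) := by
    funext i
    fin_cases i
    · simp
    · simp [mul_inv_cancel₀ (pow_ne_zero k hπ)]
  rw [h2, Matrix.diagonal_one]

lemma Hmat'_mul_Hmat {π : K} (hπ : π ≠ 0) (k : ℕ) : Hmat' π k * Hmat π k = 1 := by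
  rw [Hmat, Hmat', Matrix.diagonal_mul_diagonal]
  have h2 : (fun i => ![1, (π ^ k)⁻¹] i * ![1, π ^ k] i) = fun _ => (1 : K) := by
    funext i
    fin_cases i
    · simp
    · simp [inv_mul_cancel₀ (pow_ne_zero k hπ)]
  rw [h2, Matrix.diagonal_one]

/-- the unit `diag(1, π^k)` -/
def Hunit {π : K} (hπ : π ≠ 0) (k : ℕ) : (M2 K)ˣ :=
  ⟨Hmat π k, Hmat' π k, Hmat_mul_Hmat' hπ k, Hmat'_mul_Hmat hπ k⟩

@[simp] lemma Hunit_val {π : K} (hπ : π ≠ 0) (k : ℕ) :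
    (↑(Hunit hπ k) : M2 K) = Hmat π k := rfl

@[simp] lemma Hunit_inv_val {π : K} (hπ : π ≠ 0) (k : ℕ) :
    (↑(Hunit hπ k)⁻¹ : M2 K) = Hmat' π k := rfl

lemma Hunit_mul {π : K} (hπ : π ≠ 0) (k l : ℕ) :
    Hunit hπ k * Hunit hπ l = Hunit hπ (k + l) := by
  apply Units.ext
  show Hmat π k * Hmat π l = Hmat π (k + l)
  rw [Hmat, Hmat, Hmat, Matrix.diagonal_mul_diagonal, pow_add]
  have h2 : (fun i => ![1, π ^ k] i * ![1, π ^ l] i) = ![(1:K), π ^ k * π ^ l] := by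
    funext i
    fin_cases i <;> simp
  rw [h2]

lemma Hunit_zero {π : K} (hπ : π ≠ 0) : Hunit hπ 0 = 1 := by
  apply Units.ext
  show Hmat π 0 = 1
  rw [Hmat]
  have : ![(1:K), π ^ 0] = fun _ => (1:K) := by funext i; fin_cases i <;> simp
  rw [this, Matrix.diagonal_one]

/-- integral unit from an O-matrix with unit determinant -/
def intUnit (U : Matrix (Fin 2) (Fin 2) O) (hU : IsUnit U.det) : (M2 K)ˣ :=
  Units.map ((algebraMap O K).mapMatrix.toMonoidHom)
    ((Matrix.isUnit_iff_isUnit_det U).2 hU).unit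

lemma intUnit_val (U : Matrix (Fin 2) (Fin 2) O) (hU : IsUnit U.det) :
    (↑(intUnit (K := K) U hU) : M2 K) = U.map (algebraMap O K) := by
  simp [intUnit, RingHom.mapMatrix_apply]

lemma intUnit_val_mem (U : Matrix (Fin 2) (Fin 2) O) (hU : IsUnit U.det) :
    (↑(intUnit (K := K) U hU) : M2 K) ∈ stdOrder O K := by
  rw [intUnit_val]; exact mapMat_mem_std U

lemma intUnit_inv_val_mem (U : Matrix (Fin 2) (Fin 2) O) (hU : IsUnit U.det) :
    (↑(intUnit (K := K) U hU)⁻¹ : M2 K) ∈ stdOrder O K := by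
  unfold intUnit
  rw [Units.coe_map_inv]
  simp only [RingHom.toMonoidHom_eq_coe, MonoidHom.coe_coe, RingHom.mapMatrix_apply]
  exact mapMat_mem_std _

lemma conjOrder_std_of_unit {u : (M2 K)ˣ} (h1 : (↑u : M2 K) ∈ stdOrder O K)
    (h2 : (↑u⁻¹ : M2 K) ∈ stdOrder O K) :
    conjOrder O K u (stdOrder O K) = stdOrder O K := by
  ext z
  rw [mem_conjOrder]
  constructor
  · intro hz
    have := mul_mem (mul_mem h1 hz) h2
    rwa [conj_cancel_left] at this
  · intro hz
    exact mul_mem (mul_mem h2 hz) h1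

variable [IsDomain O] [IsFractionRing O K]

lemma inj_OK : Function.Injective (algebraMap O K) := IsFractionRing.injective O K

lemma algebraMap_ne_zero {a : O} (ha : a ≠ 0) : algebraMap O K a ≠ 0 := by
  intro h
  exact ha (inj_OK (K := K) (by rw [h, map_zero]))

lemma dvd_of_inv_pow_mul_mem {ϖ : O} (hϖ : ϖ ≠ 0) {m : ℕ} {Y : O}
    (h : ((algebraMap O K ϖ) ^ m)⁻¹ * algebraMap O K Y ∈ (algebraMap O K).range) :
    ϖ ^ m ∣ Y := by
  obtain ⟨c, hc⟩ := h
  refine ⟨c, inj_OK (K := K) ?_⟩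
  rw [_root_.map_mul, map_pow, hc, ← mul_assoc,
    mul_inv_cancel₀ (pow_ne_zero m (algebraMap_ne_zero hϖ)), one_mul]

lemma inv_pow_mul_mem_of_dvd {ϖ : O} {m : ℕ} {Y : O}
    (h : ϖ ^ m ∣ Y) (hϖ : ϖ ≠ 0) :
    ((algebraMap O K ϖ) ^ m)⁻¹ * algebraMap O K Y ∈ (algebraMap O K).range := by
  obtain ⟨c, rfl⟩ := h
  refine ⟨c, ?_⟩
  rw [_root_.map_mul, map_pow, ← mul_assoc,
    inv_mul_cancel₀ (pow_ne_zero m (algebraMap_ne_zero hϖ)), one_mul]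

end Aux4
namespace Aux5
open Aux Aux2 Aux3 Aux4 Matrix

lemma mul_std_mul {O' : Type} [CommRing O'] (C D : Matrix (Fin 2) (Fin 2) O')
    (i j k l : Fin 2) :
    (C * Matrix.single i j (1:O') * D) k l = C k i * D j l := by
  simp [Matrix.mul_apply, Matrix.single, Fin.sum_univ_two, Matrix.of_apply,
    mul_ite, ite_mul]
  fin_cases i <;> fin_cases j <;> simp

variable {O : Type} [CommRing O] [IsDomain O] [IsDiscreteValuationRing O]
  {K : Type} [Field K] [Algebra O K] [IsFractionRing O K]

lemma normalizer (x : (M2 K)ˣ)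
    (hx : conjOrder O K x (stdOrder O K) = stdOrder O K) :
    ∃ (c : K) (U : Matrix (Fin 2) (Fin 2) O), c ≠ 0 ∧ IsUnit U.det ∧
      (↑x : M2 K) = c • U.map (algebraMap O K) := by
  -- common denominator
  obtain ⟨b, hb⟩ := IsLocalization.exist_integer_multiples (nonZeroDivisors O)
    (Finset.univ : Finset (Fin 2 × Fin 2)) (fun p => (↑x : M2 K) p.1 p.2)
  have hb' : ∀ i j : Fin 2, ∃ a : O, algebraMap O K a = algebraMap O K ↑b * (↑x : M2 K) i j := by
    intro i j
    obtain ⟨a, ha⟩ := hb (i, j) (Finset.mem_univ _)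
    exact ⟨a, by rw [ha]; simp [Algebra.smul_def]⟩
  choose A hA using fun i => fun j => hb' i j
  have hbne : algebraMap O K ↑b ≠ 0 :=
    algebraMap_ne_zero (nonZeroDivisors.coe_ne_zero b)
  have hxne : (↑x : M2 K) ≠ 0 := by
    intro h0
    have h1 : (1 : M2 K) = 0 := by
      calc (1 : M2 K) = (↑x⁻¹ : M2 K) * (↑x : M2 K) := (Units.inv_mul x).symm
        _ = 0 := by rw [h0, mul_zero]
    have := congrArg (fun m : M2 K => m 0 0) h1
    simp [Matrix.one_apply] at this
  have hAne : ∃ i j, A i j ≠ 0 := by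
    by_contra hno
    push_neg at hno
    apply hxne
    ext i j
    have := hA i j
    rw [hno i j, map_zero] at this
    have h2 := (mul_eq_zero.mp this.symm).resolve_left hbne
    simpa using h2
  -- principal ideal generated by the entries
  obtain ⟨d, hd⟩ := (IsPrincipalIdealRing.principal
    (Ideal.span (Set.range fun p : Fin 2 × Fin 2 => A p.1 p.2))).principal
  have hdvd : ∀ i j, d ∣ A i j := by
    intro i j
    have h1 : A i j ∈ Ideal.span (Set.range fun p : Fin 2 × Fin 2 => A p.1 p.2) :=
      Ideal.subset_span ⟨(i, j), rfl⟩
    rw [hd] at h1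
    exact Ideal.mem_span_singleton.mp (by simpa using h1)
  choose C0 hC0 using fun i => fun j => hdvd i j
  set C : Matrix (Fin 2) (Fin 2) O := Matrix.of (fun i j => C0 i j) with hCdef
  have hC : ∀ i j, A i j = d * C i j := fun i j => hC0 i j
  have hdne : d ≠ 0 := by
    obtain ⟨i, j, hij⟩ := hAne
    intro h0
    apply hij
    rw [hC i j, h0, zero_mul]
  -- a unit entry of C
  have hunit : ∃ i j, IsUnit (C i j) := by
    have hdI : d ∈ Ideal.span (Set.range fun p : Fin 2 × Fin 2 => A p.1 p.2) := by
      rw [hd]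
      exact Ideal.subset_span rfl
    obtain ⟨t, ht⟩ := (Submodule.mem_span_range_iff_exists_fun O).mp hdI
    have hsum : (∑ p : Fin 2 × Fin 2, t p • A p.1 p.2)
        = d * ∑ p : Fin 2 × Fin 2, t p * C p.1 p.2 := by
      rw [Finset.mul_sum]
      refine Finset.sum_congr rfl fun p _ => ?_
      rw [smul_eq_mul, hC p.1 p.2]
      ring
    have hsum1 : (∑ p : Fin 2 × Fin 2, t p * C p.1 p.2) = 1 :=
      mul_left_cancel₀ hdne (by rw [← hsum, ht, mul_one])
    by_contra hno
    push_neg at hno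
    have hmem : (1 : O) ∈ IsLocalRing.maximalIdeal O := by
      rw [← hsum1]
      refine Ideal.sum_mem _ fun p _ => Ideal.mul_mem_left _ _ ?_
      rw [IsLocalRing.mem_maximalIdeal]
      exact hno p.1 p.2
    exact (Ideal.ne_top_iff_one _).mp
      (IsLocalRing.maximalIdeal.isMaximal O).ne_top hmem
  obtain ⟨i₀, j₀, hC₀⟩ := hunit
  have hxCmap : (↑x : M2 K) = (algebraMap O K d / algebraMap O K ↑b) • C.map (algebraMap O K) := by
    ext i j
    rw [Matrix.smul_apply, Matrix.map_apply]
    have h1 : algebraMap O K ↑b * (↑x : M2 K) i j = algebraMap O K d * algebraMap O K (C i j) := by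
      rw [← hA i j, hC i j, _root_.map_mul]
    rw [smul_eq_mul, div_mul_eq_mul_div, eq_div_iff hbne, mul_comm ((↑x : M2 K) i j) (algebraMap O K ↑b)]
    exact h1
  set c : K := algebraMap O K d / algebraMap O K ↑b with hc
  have hcne : c ≠ 0 := div_ne_zero (algebraMap_ne_zero hdne) hbne
  refine ⟨c, C, hcne, ?_, hxCmap⟩
  -- det C is a unit
  set M : M2 K := C.map (algebraMap O K) with hM
  set Minv : M2 K := c • (↑x⁻¹ : M2 K) with hMinv
  have hMx : M = c⁻¹ • (↑x : M2 K) := by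
    rw [hxCmap, smul_smul, inv_mul_cancel₀ hcne, one_smul]
  have hMMinv : M * Minv = 1 := by
    rw [hMx, hMinv, Matrix.smul_mul, Matrix.mul_smul, smul_smul,
      inv_mul_cancel₀ hcne, Units.mul_inv, one_smul]
  have hadj : M.adjugate = M.det • Minv := by
    calc M.adjugate = M.adjugate * (M * Minv) := by rw [hMMinv, mul_one]
      _ = (M.adjugate * M) * Minv := by rw [mul_assoc]
      _ = (M.det • (1 : M2 K)) * Minv := by rw [Matrix.adjugate_mul]
      _ = M.det • Minv := by rw [Matrix.smul_mul, one_mul]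
  have hconj : ∀ z ∈ stdOrder O K, (↑x : M2 K) * z * (↑x⁻¹ : M2 K) ∈ stdOrder O K := by
    intro z hz
    have h1 : (↑x : M2 K) * z * (↑x⁻¹ : M2 K) ∈ conjOrder O K x (stdOrder O K) := by
      rw [mem_conjOrder, conj_cancel_right]
      exact hz
    rwa [hx] at h1
  have hdet : ∀ i j k l : Fin 2, C.det ∣ C k i * C.adjugate j l := by
    intro i j k l
    have hz : (Matrix.single i j (1:O)).map (algebraMap O K) ∈ stdOrder O K := mapMat_mem_std _
    obtain ⟨s₀, hs₀⟩ := exists_preimage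
      (hconj ((Matrix.single i j (1:O)).map (algebraMap O K)) hz)
    have hkey : M * (Matrix.single i j (1:O)).map (algebraMap O K) * M.adjugate
        = M.det • ((↑x : M2 K) * (Matrix.single i j (1:O)).map (algebraMap O K) * (↑x⁻¹ : M2 K)) := by
      rw [hadj, Matrix.mul_smul]
      congr 1
      rw [hMx, hMinv, Matrix.smul_mul, Matrix.smul_mul, Matrix.mul_smul, smul_smul,
        inv_mul_cancel₀ hcne, one_smul]
    have hmapadj : M.adjugate = C.adjugate.map (algebraMap O K) := by
      rw [hM]
      exact (RingHom.map_adjugate (algebraMap O K) C).symm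
    have hO : (C * Matrix.single i j (1:O) * C.adjugate).map (algebraMap O K)
        = M.det • s₀.map (algebraMap O K) := by
      rw [Matrix.map_mul, Matrix.map_mul, ← hmapadj, hs₀, ← hM]
      exact hkey
    have hdetM : M.det = algebraMap O K C.det := by
      rw [hM]
      exact (RingHom.map_det (algebraMap O K) C).symm
    have hentry := congrArg (fun m : M2 K => m k l) hO
    simp only [Matrix.map_apply, Matrix.smul_apply, hdetM, smul_eq_mul] at hentry
    have hmm : (C * Matrix.single i j (1:O) * C.adjugate) k l = C k i * C.adjugate j l :=
      mul_std_mul C C.adjugate i j k l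
    rw [hmm] at hentry
    refine ⟨s₀ k l, inj_OK (K := K) ?_⟩
    rw [_root_.map_mul] at hentry
    rw [_root_.map_mul, _root_.map_mul]
    exact hentry
  have hadjd : ∀ j l, C.det ∣ C.adjugate j l := fun j l =>
    (IsUnit.dvd_mul_left hC₀).mp (hdet j₀ j i₀ l)
  have hdvdC : ∀ i j, C.det ∣ C i j := by
    intro i j
    fin_cases i <;> fin_cases j
    · simpa [Matrix.adjugate_fin_two] using hadjd 1 1
    · simpa [Matrix.adjugate_fin_two] using hadjd 0 1
    · simpa [Matrix.adjugate_fin_two] using hadjd 1 0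
    · simpa [Matrix.adjugate_fin_two] using hadjd 0 0
  exact isUnit_of_dvd_unit (hdvdC i₀ j₀) hC₀

end Aux5
namespace Aux6
open Aux Aux2 Aux3 Aux4 Aux5 Matrix

variable {O : Type} [CommRing O] [IsDomain O] [IsDiscreteValuationRing O]
  {K : Type} [Field K] [Algebra O K] [IsFractionRing O K]

lemma unit_inv_eq (q : (M2 K)ˣ) (y : M2 K) (h : (↑q : M2 K) * y = 1) :
    (↑q⁻¹ : M2 K) = y := by
  calc (↑q⁻¹ : M2 K) = (↑q⁻¹ : M2 K) * ((↑q : M2 K) * y) := by rw [h, mul_one]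
    _ = ((↑q⁻¹ : M2 K) * (↑q : M2 K)) * y := by rw [mul_assoc]
    _ = y := by rw [Units.inv_mul, one_mul]

lemma map_injective : Function.Injective
    (fun Z : Matrix (Fin 2) (Fin 2) O => Z.map (algebraMap O K)) := by
  intro Z W h
  ext i j
  apply inj_OK (K := K)
  exact congrArg (fun m : M2 K => m i j) h

lemma Hmat_map (ϖ : O) (k : ℕ) :
    ((Matrix.diagonal ![1, ϖ ^ k] : Matrix (Fin 2) (Fin 2) O)).map (algebraMap O K)
      = Hmat (algebraMap O K ϖ) k := by
  rw [Hmat, Matrix.diagonal_map (map_zero _)]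
  have h2 : (fun m => algebraMap O K (![1, ϖ ^ k] m))
      = ![(1:K), (algebraMap O K ϖ) ^ k] := by
    funext i
    fin_cases i <;> simp
  rw [h2]

lemma inv_unit_mem {δ : O} (hδ : IsUnit δ) :
    (algebraMap O K δ)⁻¹ ∈ (algebraMap O K).range := by
  refine ⟨↑hδ.unit⁻¹, ?_⟩
  have h1 : algebraMap O K δ * algebraMap O K ↑hδ.unit⁻¹ = 1 := by
    rw [← _root_.map_mul]
    rw [hδ.mul_val_inv]
    exact _root_.map_one _
  exact (inv_eq_of_mul_eq_one_right h1).symm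

lemma map_smul' (r : O) (U : Matrix (Fin 2) (Fin 2) O) :
    (r • U).map (algebraMap O K) = algebraMap O K r • U.map (algebraMap O K) := by
  ext i j
  simp [Matrix.map_apply, Matrix.smul_apply, smul_eq_mul, _root_.map_mul]

/-- The geodesic lemma: any maximal order `D` on a geodesic between `D₁` and
`D₂` contains `D₁ ⊓ D₂`. -/
lemma geodesic (ϖ : O) (hϖ : Irreducible ϖ) (hπ : algebraMap O K ϖ ≠ 0)
    {n a b : ℕ} (hab : a + b = n)
    {g : (M2 K)ˣ} {D₁ D₂ D : Subalgebra O (M2 K)}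
    (hD₁ : D₁ = conjOrder O K g (stdOrder O K))
    (hD₂ : D₂ = conjOrder O K (g * Hunit hπ n) (stdOrder O K))
    (hA : BTdist O K ϖ a D₁ D) (hB : BTdist O K ϖ b D D₂) :
    D₁ ⊓ D₂ ≤ D := by
  subst hab
  obtain ⟨g₁, h₁, hcoe₁, e₁, e₂⟩ := hA
  obtain ⟨g₂, h₂, hcoe₂, e₃, e₄⟩ := hB
  have hh₁ : h₁ = Hunit hπ a := Units.ext hcoe₁
  have hh₂ : h₂ = Hunit hπ b := Units.ext hcoe₂
  subst hh₁ hh₂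
  -- normalizing elements
  have hq₁ : conjOrder O K (g⁻¹ * g₁) (stdOrder O K) = stdOrder O K := by
    rw [conjOrder_mul, ← e₁, hD₁, ← conjOrder_mul, inv_mul_cancel, conjOrder_one]
  have hq₂ : conjOrder O K ((g₁ * Hunit hπ a)⁻¹ * g₂) (stdOrder O K) = stdOrder O K := by
    rw [conjOrder_mul, ← e₃, e₂, ← conjOrder_mul, inv_mul_cancel, conjOrder_one]
  have hq₃ : conjOrder O K ((g * Hunit hπ (a + b))⁻¹ * (g₂ * Hunit hπ b)) (stdOrder O K)
      = stdOrder O K := by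
    rw [conjOrder_mul, ← e₄, hD₂, ← conjOrder_mul, inv_mul_cancel, conjOrder_one]
  obtain ⟨c₁, U₁, hc₁, hdU₁, hval₁⟩ := normalizer _ hq₁
  obtain ⟨c₂, U₂, hc₂, hdU₂, hval₂⟩ := normalizer _ hq₂
  obtain ⟨c₃, U₃, hc₃, hdU₃, hval₃⟩ := normalizer _ hq₃
  -- the unit identity
  have hgrp : Hunit hπ (a + b) * ((g * Hunit hπ (a + b))⁻¹ * (g₂ * Hunit hπ b))
      = (g⁻¹ * g₁) * Hunit hπ a * ((g₁ * Hunit hπ a)⁻¹ * g₂) * Hunit hπ b := by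
    group
  -- value form
  have hval : Hmat (algebraMap O K ϖ) (a + b) * (c₃ • U₃.map (algebraMap O K))
      = (c₁ • U₁.map (algebraMap O K)) * Hmat (algebraMap O K ϖ) a
        * (c₂ • U₂.map (algebraMap O K)) * Hmat (algebraMap O K ϖ) b := by
    calc Hmat (algebraMap O K ϖ) (a + b) * (c₃ • U₃.map (algebraMap O K))
        = ↑(Hunit hπ (a + b)) * ↑((g * Hunit hπ (a + b))⁻¹ * (g₂ * Hunit hπ b)) := by
          rw [hval₃, Hunit_val]
      _ = ↑(Hunit hπ (a + b) * ((g * Hunit hπ (a + b))⁻¹ * (g₂ * Hunit hπ b))) :=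
          (Units.val_mul _ _).symm
      _ = ↑((g⁻¹ * g₁) * Hunit hπ a * ((g₁ * Hunit hπ a)⁻¹ * g₂) * Hunit hπ b) := by
          rw [hgrp]
      _ = ↑((g⁻¹ * g₁) * Hunit hπ a * ((g₁ * Hunit hπ a)⁻¹ * g₂)) * ↑(Hunit hπ b) :=
          Units.val_mul _ _
      _ = ↑((g⁻¹ * g₁) * Hunit hπ a) * ↑((g₁ * Hunit hπ a)⁻¹ * g₂) * ↑(Hunit hπ b) := by
          rw [Units.val_mul ((g⁻¹ * g₁) * Hunit hπ a)]
      _ = ↑(g⁻¹ * g₁) * ↑(Hunit hπ a) * ↑((g₁ * Hunit hπ a)⁻¹ * g₂) * ↑(Hunit hπ b) := by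
          rw [Units.val_mul (g⁻¹ * g₁)]
      _ = (c₁ • U₁.map (algebraMap O K)) * Hmat (algebraMap O K ϖ) a
          * (c₂ • U₂.map (algebraMap O K)) * Hmat (algebraMap O K ϖ) b := by
          rw [hval₁, hval₂, Hunit_val, Hunit_val]
  -- determinants
  have hdetHmat : ∀ k : ℕ, (Hmat (algebraMap O K ϖ) k).det = (algebraMap O K ϖ) ^ k := by
    intro k
    rw [Hmat, Matrix.det_diagonal, Fin.prod_univ_two]
    simp
  have hdetmap : ∀ U : Matrix (Fin 2) (Fin 2) O,
      (U.map (algebraMap O K)).det = algebraMap O K U.det := by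
    intro U
    exact (RingHom.map_det (algebraMap O K) U).symm
  have hdeteq : c₃ ^ 2 * algebraMap O K U₃.det
      = (c₁ * c₂) ^ 2 * (algebraMap O K U₁.det * algebraMap O K U₂.det) := by
    have h := congrArg Matrix.det hval
    simp only [Matrix.det_mul, Matrix.det_smul, Fintype.card_fin, hdetHmat, hdetmap] at h
    apply mul_left_cancel₀ (pow_ne_zero (a + b) hπ)
    linear_combination h
  set δ : O := U₃.det * ↑(hdU₁.unit * hdU₂.unit)⁻¹ with hδdef
  have hδunit : IsUnit δ := hdU₃.mul (Units.isUnit _)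
  have h0 : (U₁.det * U₂.det) * ↑(hdU₁.unit * hdU₂.unit)⁻¹ = 1 := by
    have h2 := Units.mul_inv (hdU₁.unit * hdU₂.unit)
    rw [Units.val_mul, hdU₁.unit_spec, hdU₂.unit_spec] at h2
    exact h2
  have hfinv : algebraMap O K ↑(hdU₁.unit * hdU₂.unit)⁻¹
      = (algebraMap O K U₁.det * algebraMap O K U₂.det)⁻¹ := by
    have h1 : (algebraMap O K U₁.det * algebraMap O K U₂.det)
        * algebraMap O K ↑(hdU₁.unit * hdU₂.unit)⁻¹ = 1 := by
      rw [← _root_.map_mul, ← _root_.map_mul, h0, _root_.map_one]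
    exact (inv_eq_of_mul_eq_one_right h1).symm
  have hd1ne : algebraMap O K U₁.det ≠ 0 := algebraMap_ne_zero hdU₁.ne_zero
  have hd2ne : algebraMap O K U₂.det ≠ 0 := algebraMap_ne_zero hdU₂.ne_zero
  have hne12 : algebraMap O K U₁.det * algebraMap O K U₂.det ≠ 0 := mul_ne_zero hd1ne hd2ne
  have hinv1 : (algebraMap O K U₁.det * algebraMap O K U₂.det)⁻¹
      * (algebraMap O K U₁.det * algebraMap O K U₂.det) = 1 := inv_mul_cancel₀ hne12
  have hμsq : ((c₁ * c₂) / c₃) ^ 2 = algebraMap O K δ := by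
    rw [hδdef, _root_.map_mul, hfinv, div_pow, div_eq_iff (pow_ne_zero 2 hc₃)]
    linear_combination (-((algebraMap O K U₁.det * algebraMap O K U₂.det)⁻¹)) * hdeteq
      - (c₁ * c₂) ^ 2 * hinv1
  have hμne : (c₁ * c₂) / c₃ ≠ 0 := div_ne_zero (mul_ne_zero hc₁ hc₂) hc₃
  have hμint : ∃ m : O, algebraMap O K m = (c₁ * c₂) / c₃ := by
    apply IsIntegrallyClosed.isIntegral_iff.mp
    refine ⟨Polynomial.X ^ 2 - Polynomial.C δ,
      Polynomial.monic_X_pow_sub_C δ two_ne_zero, ?_⟩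
    simp only [Polynomial.eval₂_sub, Polynomial.eval₂_pow, Polynomial.eval₂_X,
      Polynomial.eval₂_C]
    rw [sub_eq_zero, ← hμsq]
  obtain ⟨m, hm⟩ := hμint
  have hmunit : IsUnit m := by
    have hmm : m * m = δ := inj_OK (K := K) (by
      rw [_root_.map_mul, hm, ← hμsq]
      ring)
    exact isUnit_of_dvd_unit ⟨m, hmm.symm⟩ hδunit
  have hminv : algebraMap O K ↑hmunit.unit⁻¹ = ((c₁ * c₂) / c₃)⁻¹ := by
    have h1 : ((c₁ * c₂) / c₃) * algebraMap O K ↑hmunit.unit⁻¹ = 1 := by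
      rw [← hm, ← _root_.map_mul, hmunit.mul_val_inv, _root_.map_one]
    exact (inv_eq_of_mul_eq_one_right h1).symm
  -- the equation over O
  set W : Matrix (Fin 2) (Fin 2) O := (↑hmunit.unit⁻¹ : O) • U₃ with hWdef
  have h2 : c₃ • (Hmat (algebraMap O K ϖ) (a + b) * U₃.map (algebraMap O K))
      = (c₁ * c₂) • (U₁.map (algebraMap O K) * Hmat (algebraMap O K ϖ) a
        * U₂.map (algebraMap O K) * Hmat (algebraMap O K ϖ) b) := by
    calc c₃ • (Hmat (algebraMap O K ϖ) (a + b) * U₃.map (algebraMap O K))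
        = Hmat (algebraMap O K ϖ) (a + b) * (c₃ • U₃.map (algebraMap O K)) := by
          rw [Matrix.mul_smul]
      _ = (c₁ • U₁.map (algebraMap O K)) * Hmat (algebraMap O K ϖ) a
          * (c₂ • U₂.map (algebraMap O K)) * Hmat (algebraMap O K ϖ) b := hval
      _ = (c₁ * c₂) • (U₁.map (algebraMap O K) * Hmat (algebraMap O K ϖ) a
          * U₂.map (algebraMap O K) * Hmat (algebraMap O K ϖ) b) := by
          rw [Matrix.smul_mul, Matrix.smul_mul, Matrix.mul_smul, Matrix.smul_mul,
            Matrix.smul_mul, smul_smul]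
  have h4 : ((c₁ * c₂) / c₃) • (U₁.map (algebraMap O K) * Hmat (algebraMap O K ϖ) a
        * U₂.map (algebraMap O K) * Hmat (algebraMap O K ϖ) b)
      = Hmat (algebraMap O K ϖ) (a + b) * U₃.map (algebraMap O K) := by
    rw [div_eq_mul_inv, mul_comm, ← smul_smul, ← h2, smul_smul,
      inv_mul_cancel₀ hc₃, one_smul]
  have hOeq : U₁ * (Matrix.diagonal ![1, ϖ ^ a]) * U₂ * (Matrix.diagonal ![1, ϖ ^ b])
      = (Matrix.diagonal ![1, ϖ ^ (a + b)]) * W := by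
    apply map_injective (K := K)
    show (U₁ * (Matrix.diagonal ![1, ϖ ^ a]) * U₂
        * (Matrix.diagonal ![1, ϖ ^ b])).map (algebraMap O K)
      = ((Matrix.diagonal ![1, ϖ ^ (a + b)]) * W).map (algebraMap O K)
    rw [Matrix.map_mul, Matrix.map_mul, Matrix.map_mul, Matrix.map_mul, Hmat_map,
      Hmat_map, Hmat_map, hWdef, map_smul', hminv, Matrix.mul_smul]
    calc U₁.map (algebraMap O K) * Hmat (algebraMap O K ϖ) a
          * U₂.map (algebraMap O K) * Hmat (algebraMap O K ϖ) b
        = ((c₁ * c₂) / c₃)⁻¹ • (((c₁ * c₂) / c₃)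
            • (U₁.map (algebraMap O K) * Hmat (algebraMap O K ϖ) a
              * U₂.map (algebraMap O K) * Hmat (algebraMap O K ϖ) b)) :=
          (inv_smul_smul₀ hμne _).symm
      _ = ((c₁ * c₂) / c₃)⁻¹
            • (Hmat (algebraMap O K ϖ) (a + b) * U₃.map (algebraMap O K)) := by rw [h4]
  -- entry extraction over O
  have hent10 := congrArg (fun M : Matrix (Fin 2) (Fin 2) O => M 1 0) hOeq
  have hent11 := congrArg (fun M : Matrix (Fin 2) (Fin 2) O => M 1 1) hOeq
  simp [Matrix.mul_apply, Matrix.diagonal, Matrix.of_apply, Fin.sum_univ_two]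
    at hent10 hent11
  have hs1 : ϖ ^ a ∣ U₁ 1 0 * U₂ 0 0 := by
    have he : U₁ 1 0 * U₂ 0 0
        = ϖ ^ (a + b) * W 1 0 - U₁ 1 1 * ϖ ^ a * U₂ 1 0 := by
      linear_combination hent10
    rw [he]
    exact dvd_sub ((pow_dvd_pow ϖ (Nat.le_add_right a b)).mul_right _)
      (Dvd.dvd.mul_right (dvd_mul_left _ _) _)
  have hs2 : ϖ ^ a ∣ U₁ 1 0 * U₂ 0 1 := by
    refine ⟨W 1 1 - U₁ 1 1 * U₂ 1 1, ?_⟩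
    apply mul_right_cancel₀ (pow_ne_zero b hϖ.ne_zero)
    have hpow : (ϖ : O) ^ (a + b) = ϖ ^ a * ϖ ^ b := pow_add ϖ a b
    linear_combination hent11 + (W 1 1 - U₁ 1 1 * U₂ 1 1) * hpow
  have hsdvd : ϖ ^ a ∣ U₁ 1 0 := by
    have h5 : U₁ 1 0 * U₂.det
        = U₂ 1 1 * (U₁ 1 0 * U₂ 0 0) - U₂ 1 0 * (U₁ 1 0 * U₂ 0 1) := by
      rw [Matrix.det_fin_two]
      ring
    have h6 : ϖ ^ a ∣ U₁ 1 0 * U₂.det := by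
      rw [h5]
      exact dvd_sub (hs1.mul_left _) (hs2.mul_left _)
    exact (IsUnit.dvd_mul_right hdU₂).mp h6
  -- final membership
  intro x hx
  have hx1 : x ∈ D₁ := hx.1
  have hx2 : x ∈ D₂ := hx.2
  rw [hD₁, mem_conjOrder] at hx1
  rw [hD₂, mem_conjOrder] at hx2
  obtain ⟨Y, hY⟩ := exists_preimage hx1
  have hx2' : Hmat' (algebraMap O K ϖ) (a + b) * ((↑g⁻¹ : M2 K) * x * (↑g : M2 K))
      * Hmat (algebraMap O K ϖ) (a + b) ∈ stdOrder O K := by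
    have heq : (↑(g * Hunit hπ (a + b))⁻¹ : M2 K) * x * ↑(g * Hunit hπ (a + b))
        = Hmat' (algebraMap O K ϖ) (a + b) * ((↑g⁻¹ : M2 K) * x * (↑g : M2 K))
          * Hmat (algebraMap O K ϖ) (a + b) := by
      rw [_root_.mul_inv_rev, Units.val_mul, Units.val_mul, Hunit_inv_val, Hunit_val]
      noncomm_ring
    rwa [heq] at hx2
  have hY10 : ϖ ^ (a + b) ∣ Y 1 0 := by
    have hent := hx2' 1 0
    rw [Hmat, Hmat', Matrix.mul_diagonal, Matrix.diagonal_mul] at hent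
    simp only [Matrix.cons_val_zero, Matrix.cons_val_one, Matrix.head_cons,
      mul_one] at hent
    apply dvd_of_inv_pow_mul_mem hϖ.ne_zero (K := K)
    have hyY : ((↑g⁻¹ : M2 K) * x * (↑g : M2 K)) 1 0 = algebraMap O K (Y 1 0) := by
      rw [← hY]
      simp [Matrix.map_apply]
    rwa [hyY] at hent
  have hY10a : ϖ ^ a ∣ Y 1 0 :=
    dvd_trans (pow_dvd_pow ϖ (Nat.le_add_right a b)) hY10
  -- the conjugated element
  have hone : ((1 : Matrix (Fin 2) (Fin 2) O)).map (algebraMap O K) = (1 : M2 K) :=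
    Matrix.map_one _ (map_zero _) (_root_.map_one _)
  have hq₁inv : (↑(g⁻¹ * g₁)⁻¹ : M2 K)
      = c₁⁻¹ • ((algebraMap O K U₁.det)⁻¹ • (U₁.adjugate.map (algebraMap O K))) := by
    apply unit_inv_eq
    rw [hval₁, smul_smul, Matrix.smul_mul, Matrix.mul_smul, smul_smul, ← Matrix.map_mul,
      Matrix.mul_adjugate, map_smul', hone, smul_smul]
    rw [show c₁ * (c₁⁻¹ * (algebraMap O K U₁.det)⁻¹) * algebraMap O K U₁.det = 1 by
      field_simp]
    exact one_smul _ _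
  have hconjy : (↑(g⁻¹ * g₁)⁻¹ : M2 K) * ((↑g⁻¹ : M2 K) * x * (↑g : M2 K))
        * (↑(g⁻¹ * g₁) : M2 K)
      = (algebraMap O K U₁.det)⁻¹ • ((U₁.adjugate * Y * U₁).map (algebraMap O K)) := by
    rw [hq₁inv, hval₁, ← hY, smul_smul, Matrix.smul_mul, Matrix.smul_mul,
      Matrix.mul_smul, smul_smul, ← Matrix.map_mul, ← Matrix.map_mul]
    congr 1
    field_simp
  have hZ10 : ϖ ^ a ∣ (U₁.adjugate * Y * U₁) 1 0 := by
    have hent : (U₁.adjugate * Y * U₁) 1 0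
        = U₁.adjugate 1 0 * (Y 0 0 * U₁ 0 0 + Y 0 1 * U₁ 1 0)
          + U₁.adjugate 1 1 * (Y 1 0 * U₁ 0 0 + Y 1 1 * U₁ 1 0) := by
      simp [Matrix.mul_apply, Fin.sum_univ_two]
      ring
    have hadj10 : U₁.adjugate 1 0 = -U₁ 1 0 := by
      rw [Matrix.adjugate_fin_two]
      rfl
    rw [hent, hadj10]
    refine dvd_add ?_ (Dvd.dvd.mul_left (dvd_add (hY10a.mul_right _)
      (hsdvd.mul_left _)) _)
    exact ((dvd_neg.mpr hsdvd).mul_right _)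
  -- conclude
  rw [e₂, mem_conjOrder]
  have hg₁ : g₁ * Hunit hπ a = g * ((g⁻¹ * g₁) * Hunit hπ a) := by group
  have htarget : (↑(g₁ * Hunit hπ a)⁻¹ : M2 K) * x * ↑(g₁ * Hunit hπ a)
      = Hmat' (algebraMap O K ϖ) a * ((↑(g⁻¹ * g₁)⁻¹ : M2 K)
          * ((↑g⁻¹ : M2 K) * x * (↑g : M2 K)) * (↑(g⁻¹ * g₁) : M2 K))
        * Hmat (algebraMap O K ϖ) a := by
    rw [hg₁]
    rw [_root_.mul_inv_rev, _root_.mul_inv_rev, Units.val_mul, Units.val_mul,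
      Units.val_mul, Units.val_mul, Hunit_inv_val, Hunit_val]
    noncomm_ring
  rw [htarget, hconjy]
  intro i j
  rw [Hmat, Hmat', Matrix.mul_diagonal, Matrix.diagonal_mul, Matrix.smul_apply,
    Matrix.map_apply, smul_eq_mul]
  fin_cases i <;> fin_cases j <;>
    simp only [Fin.zero_eta, Fin.mk_one, Matrix.cons_val_zero, Matrix.cons_val_one,
      Matrix.head_cons, one_mul, mul_one]
  · exact mul_mem (inv_unit_mem hdU₁) ⟨_, rfl⟩
  · exact mul_mem (mul_mem (inv_unit_mem hdU₁) ⟨_, rfl⟩) ⟨ϖ ^ a, by rw [map_pow]⟩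
  · rw [show ((algebraMap O K ϖ) ^ a)⁻¹ * ((algebraMap O K U₁.det)⁻¹
        * algebraMap O K ((U₁.adjugate * Y * U₁) 1 0))
      = (algebraMap O K U₁.det)⁻¹ * (((algebraMap O K ϖ) ^ a)⁻¹
        * algebraMap O K ((U₁.adjugate * Y * U₁) 1 0)) by ring]
    exact mul_mem (inv_unit_mem hdU₁) (inv_pow_mul_mem_of_dvd hZ10 hϖ.ne_zero)
  · rw [show ((algebraMap O K ϖ) ^ a)⁻¹ * ((algebraMap O K U₁.det)⁻¹
        * algebraMap O K ((U₁.adjugate * Y * U₁) 1 1)) * (algebraMap O K ϖ) ^ a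
      = (algebraMap O K U₁.det)⁻¹ * algebraMap O K ((U₁.adjugate * Y * U₁) 1 1)
        * (((algebraMap O K ϖ) ^ a)⁻¹ * (algebraMap O K ϖ) ^ a) by ring]
    rw [inv_mul_cancel₀ (pow_ne_zero a hπ), mul_one]
    exact mul_mem (inv_unit_mem hdU₁) ⟨_, rfl⟩

end Aux6
namespace Aux7
open Aux Aux2 Aux3 Aux4 Aux5 Aux6 Matrix

variable {O : Type} [CommRing O] [IsDomain O] [IsDiscreteValuationRing O]
  {K : Type} [Field K] [Algebra O K] [IsFractionRing O K]

lemma shrink_mem (ϖ : O) (hπ : algebraMap O K ϖ ≠ 0) {m r : ℕ} (hm : m ≤ r)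
    (g₃ : (M2 K)ˣ) {d : M2 K} (hd : d ∈ conjOrder O K g₃ (stdOrder O K)) :
    (ϖ ^ r) • d ∈ conjOrder O K (g₃ * Hunit hπ m) (stdOrder O K) := by
  rw [mem_conjOrder] at hd ⊢
  have heq : (↑(g₃ * Hunit hπ m)⁻¹ : M2 K) * ((ϖ ^ r) • d) * ↑(g₃ * Hunit hπ m)
      = (ϖ ^ r) • (Hmat' (algebraMap O K ϖ) m * ((↑g₃⁻¹ : M2 K) * d * (↑g₃ : M2 K))
          * Hmat (algebraMap O K ϖ) m) := by
    rw [_root_.mul_inv_rev, Units.val_mul, Units.val_mul, Hunit_inv_val, Hunit_val]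
    simp only [Matrix.mul_smul, Matrix.smul_mul, mul_assoc]
  rw [heq]
  have hfp : ∀ k : ℕ, algebraMap O K (ϖ ^ k) ∈ (algebraMap O K).range :=
    fun k => ⟨_, rfl⟩
  have hp : ∀ k : ℕ, ((algebraMap O K ϖ) ^ k) ∈ (algebraMap O K).range :=
    fun k => ⟨ϖ ^ k, by rw [map_pow]⟩
  intro i j
  rw [Matrix.smul_apply, Hmat, Hmat', Matrix.mul_diagonal, Matrix.diagonal_mul,
    Algebra.smul_def]
  fin_cases i <;> fin_cases j <;>
    simp only [Fin.zero_eta, Fin.mk_one, Matrix.cons_val_zero, Matrix.cons_val_one,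
      Matrix.head_cons, one_mul, mul_one]
  · exact mul_mem (hfp r) (hd 0 0)
  · exact mul_mem (hfp r) (mul_mem (hd 0 1) (hp m))
  · rw [show algebraMap O K (ϖ ^ r) * (((algebraMap O K ϖ) ^ m)⁻¹
        * ((↑g₃⁻¹ : M2 K) * d * (↑g₃ : M2 K)) 1 0)
      = ((algebraMap O K ϖ) ^ (r - m)) * ((↑g₃⁻¹ : M2 K) * d * (↑g₃ : M2 K)) 1 0 by
        rw [pow_sub₀ _ hπ hm, map_pow]
        ring]
    exact mul_mem (hp (r - m)) (hd 1 0)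
  · rw [show algebraMap O K (ϖ ^ r) * (((algebraMap O K ϖ) ^ m)⁻¹
        * ((↑g₃⁻¹ : M2 K) * d * (↑g₃ : M2 K)) 1 1 * (algebraMap O K ϖ) ^ m)
      = algebraMap O K (ϖ ^ r) * ((↑g₃⁻¹ : M2 K) * d * (↑g₃ : M2 K)) 1 1
          * (((algebraMap O K ϖ) ^ m)⁻¹ * (algebraMap O K ϖ) ^ m) by ring]
    rw [inv_mul_cancel₀ (pow_ne_zero m hπ), mul_one]
    exact mul_mem (hfp r) (hd 1 1)

lemma shrink_le (ϖ : O) (hπ : algebraMap O K ϖ ≠ 0) {m r : ℕ} (hm : m ≤ r)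
    (g₃ : (M2 K)ˣ) :
    shrinkMod O K ϖ r (Subalgebra.toSubmodule (conjOrder O K g₃ (stdOrder O K)))
      ≤ Subalgebra.toSubmodule (conjOrder O K (g₃ * Hunit hπ m) (stdOrder O K)) := by
  rw [shrinkMod]
  apply sup_le
  · rw [Submodule.span_le]
    intro y hy
    rw [Set.mem_singleton_iff] at hy
    subst hy
    exact one_mem (conjOrder O K (g₃ * Hunit hπ m) (stdOrder O K))
  · rw [Submodule.smul_le]
    intro c hc d hd
    obtain ⟨t, ht⟩ := Ideal.mem_span_singleton.mp hc
    subst ht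
    rw [mul_comm, mul_smul]
    exact Submodule.smul_mem _ t (shrink_mem ϖ hπ hm g₃ hd)

end Aux7

section Statements

variable (O : Type) [CommRing O] [IsDomain O] [IsDiscreteValuationRing O]
  [IsAdicComplete (IsLocalRing.maximalIdeal O) O]
  [Finite (IsLocalRing.ResidueField O)]
  (K : Type) [Field K] [Algebra O K] [IsFractionRing O K]

open Aux Aux2 Aux3 Aux4 Aux5 Aux6 Aux7 Matrix

/-- `O_K·1 + ϖ^r·E`, for `E` the Eichler order `D₁ ∩ D₂`,
equals the intersection of all maximal orders at distance at most `r` from the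
geodesic segment between `D₁` and `D₂`. -/
theorem shrink_eichler_eq_tubular_intersection (ϖ : O) (hϖ : Irreducible ϖ)
    (n r : ℕ) (D₁ D₂ : Subalgebra O (M2 K))
    (h1 : IsMaximalOrder O K D₁) (h2 : IsMaximalOrder O K D₂)
    (hd : BTdist O K ϖ n D₁ D₂) :
    (shrinkMod O K ϖ r (Subalgebra.toSubmodule (D₁ ⊓ D₂)) : Set (M2 K)) =
      ⋂ D' ∈ {D' : Subalgebra O (M2 K) | IsMaximalOrder O K D' ∧
          ∃ D : Subalgebra O (M2 K), IsMaximalOrder O K D ∧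
            (∃ a b : ℕ, BTdist O K ϖ a D₁ D ∧ BTdist O K ϖ b D D₂ ∧ a + b = n) ∧
            BTdistLE O K ϖ r D D'},
        (D' : Set (M2 K)) := by
  classical
  have hπ : algebraMap O K ϖ ≠ 0 := algebraMap_ne_zero hϖ.ne_zero
  obtain ⟨g, h, hcoe, hD₁g, hD₂g⟩ := hd
  have hh : h = Hunit hπ n := Units.ext hcoe
  subst hh
  ext x
  rw [Set.mem_iInter₂]
  constructor
  · intro hx
    rintro D' ⟨hD'max, D, hDmax, ⟨a, b, hA, hB, hab⟩, m, hm, hbt⟩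
    obtain ⟨g₃, h₃, hcoe₃, e₅, e₆⟩ := hbt
    have hh₃ : h₃ = Hunit hπ m := Units.ext hcoe₃
    subst hh₃
    have hge : D₁ ⊓ D₂ ≤ D := geodesic ϖ hϖ hπ hab hD₁g hD₂g hA hB
    have h1' : x ∈ shrinkMod O K ϖ r (Subalgebra.toSubmodule D) := by
      have hmono : shrinkMod O K ϖ r (Subalgebra.toSubmodule (D₁ ⊓ D₂))
          ≤ shrinkMod O K ϖ r (Subalgebra.toSubmodule D) := by
        rw [shrinkMod, shrinkMod]
        exact sup_le_sup_left (Submodule.smul_mono le_rfl (fun z hz => hge hz)) _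
      exact hmono (SetLike.mem_coe.mp hx)
    have h2' : x ∈ conjOrder O K (g₃ * Hunit hπ m) (stdOrder O K) := by
      have hle := shrink_le ϖ hπ hm g₃
      rw [← e₅] at hle
      exact hle h1'
    rw [e₆]
    exact SetLike.mem_coe.mpr h2'
  · intro hx
    have key : ∀ (a m : ℕ), a ≤ n → m ≤ r → ∀ u : (M2 K)ˣ,
        (↑u : M2 K) ∈ stdOrder O K → (↑u⁻¹ : M2 K) ∈ stdOrder O K →
        x ∈ conjOrder O K (g * Hunit hπ a * u * Hunit hπ m) (stdOrder O K) := by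
      intro a m ha hm u hu hu'
      have hmem : conjOrder O K (g * Hunit hπ a * u * Hunit hπ m) (stdOrder O K)
          ∈ {D' : Subalgebra O (M2 K) | IsMaximalOrder O K D' ∧
            ∃ D : Subalgebra O (M2 K), IsMaximalOrder O K D ∧
              (∃ a b : ℕ, BTdist O K ϖ a D₁ D ∧ BTdist O K ϖ b D D₂ ∧ a + b = n) ∧
              BTdistLE O K ϖ r D D'} := by
        refine ⟨conj_std_isMaximalOrder _,
          conjOrder O K (g * Hunit hπ a) (stdOrder O K), conj_std_isMaximalOrder _,
          ⟨a, n - a, ⟨g, Hunit hπ a, rfl, hD₁g, rfl⟩, ?_, Nat.add_sub_cancel' ha⟩,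
          ⟨m, hm, g * Hunit hπ a * u, Hunit hπ m, rfl, ?_, rfl⟩⟩
        · refine ⟨g * Hunit hπ a, Hunit hπ (n - a), rfl, rfl, ?_⟩
          rw [hD₂g, mul_assoc, Hunit_mul, Nat.add_sub_cancel' ha]
        · rw [conjOrder_mul (g * Hunit hπ a) u, conjOrder_std_of_unit hu hu']
      exact SetLike.mem_coe.mp (hx _ hmem)
    -- extract entry conditions
    have hone_mem : ((1 : (M2 K)ˣ) : M2 K) ∈ stdOrder O K := by
      rw [Units.val_one]; exact one_mem _
    have hone_mem' : (↑(1 : (M2 K)ˣ)⁻¹ : M2 K) ∈ stdOrder O K := by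
      rw [inv_one, Units.val_one]; exact one_mem _
    have h00 : x ∈ conjOrder O K g (stdOrder O K) := by
      have hk := key 0 0 (Nat.zero_le _) (Nat.zero_le _) 1 hone_mem hone_mem'
      rwa [Hunit_zero, mul_one, mul_one, mul_one] at hk
    obtain ⟨Y, hY⟩ := exists_preimage (mem_conjOrder.mp h00)
    have hnr : x ∈ conjOrder O K (g * Hunit hπ (n + r)) (stdOrder O K) := by
      have hk := key n r le_rfl le_rfl 1 hone_mem hone_mem'
      rwa [mul_one, mul_assoc, Hunit_mul] at hk
    have hY10 : ϖ ^ (n + r) ∣ Y 1 0 := by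
      have hent := mem_conjOrder.mp hnr
      have heq : (↑(g * Hunit hπ (n + r))⁻¹ : M2 K) * x * ↑(g * Hunit hπ (n + r))
          = Hmat' (algebraMap O K ϖ) (n + r) * (Y.map (algebraMap O K))
            * Hmat (algebraMap O K ϖ) (n + r) := by
        rw [_root_.mul_inv_rev, Units.val_mul, Units.val_mul, Hunit_inv_val, Hunit_val,
          hY]
        noncomm_ring
      rw [heq] at hent
      have h10 := hent 1 0
      rw [Hmat, Hmat', Matrix.mul_diagonal, Matrix.diagonal_mul] at h10
      simp only [Matrix.cons_val_zero, Matrix.cons_val_one, Matrix.head_cons, mul_one,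
        Matrix.map_apply] at h10
      exact dvd_of_inv_pow_mul_mem hϖ.ne_zero h10
    have hY10r : ϖ ^ r ∣ Y 1 0 :=
      dvd_trans (pow_dvd_pow ϖ (Nat.le_add_left r n)) hY10
    -- the swap unit
    have hS : ((!![0,1;1,0] : M2 K)) * (!![0,1;1,0] : M2 K) = 1 := by
      ext i j
      fin_cases i <;> fin_cases j <;>
        simp [Matrix.mul_apply, Fin.sum_univ_two, Matrix.one_apply]
    set σu : (M2 K)ˣ := ⟨!![0,1;1,0], !![0,1;1,0], hS, hS⟩ with hσdef
    have hσmem : (↑σu : M2 K) ∈ stdOrder O K := by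
      intro i j
      fin_cases i <;> fin_cases j <;> simp [hσdef] <;>
        first
        | exact zero_mem ((algebraMap O K).range)
        | exact one_mem ((algebraMap O K).range)
    have hσinv : (↑σu⁻¹ : M2 K) = !![0,1;1,0] := rfl
    have hσmem' : (↑σu⁻¹ : M2 K) ∈ stdOrder O K := by rw [hσinv]; exact hσmem
    have hσ : x ∈ conjOrder O K (g * σu * Hunit hπ r) (stdOrder O K) := by
      have hk := key 0 r (Nat.zero_le _) le_rfl σu hσmem hσmem'
      rwa [Hunit_zero, mul_one] at hk
    have hY01 : ϖ ^ r ∣ Y 0 1 := by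
      have hent := mem_conjOrder.mp hσ
      have heq : (↑(g * σu * Hunit hπ r)⁻¹ : M2 K) * x * ↑(g * σu * Hunit hπ r)
          = Hmat' (algebraMap O K ϖ) r * ((!![0,1;1,0] : M2 K) * Y.map (algebraMap O K)
            * (!![0,1;1,0] : M2 K)) * Hmat (algebraMap O K ϖ) r := by
        rw [_root_.mul_inv_rev, _root_.mul_inv_rev, Units.val_mul, Units.val_mul,
          Units.val_mul, Units.val_mul, Hunit_inv_val, Hunit_val, hσinv]
        rw [show (↑σu : M2 K) = !![0,1;1,0] from rfl]
        rw [show Hmat' (algebraMap O K ϖ) r * ((!![0,1;1,0] : M2 K) * (↑g⁻¹ : M2 K)) * x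
            * ((↑g : M2 K) * (!![0,1;1,0] : M2 K) * Hmat (algebraMap O K ϖ) r)
          = Hmat' (algebraMap O K ϖ) r * ((!![0,1;1,0] : M2 K)
              * ((↑g⁻¹ : M2 K) * x * (↑g : M2 K)) * (!![0,1;1,0] : M2 K))
            * Hmat (algebraMap O K ϖ) r by noncomm_ring]
        rw [hY]
      rw [heq] at hent
      have h10 := hent 1 0
      rw [Hmat, Hmat', Matrix.mul_diagonal, Matrix.diagonal_mul] at h10
      simp only [Matrix.cons_val_zero, Matrix.cons_val_one, Matrix.head_cons, mul_one] at h10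
      have hswap : ((!![0,1;1,0] : M2 K) * Y.map (algebraMap O K)
          * (!![0,1;1,0] : M2 K)) 1 0 = algebraMap O K (Y 0 1) := by
        simp [Matrix.mul_apply, Fin.sum_univ_two, Matrix.map_apply, Matrix.vecMul,
          dotProduct, Matrix.vecHead, Matrix.vecTail]
      rw [hswap] at h10
      exact dvd_of_inv_pow_mul_mem hϖ.ne_zero h10
    -- the transvection unit
    have hT : ((!![1,0;1,1] : M2 K)) * (!![1,0;-1,1] : M2 K) = 1 := by
      ext i j
      fin_cases i <;> fin_cases j <;>
        simp [Matrix.mul_apply, Fin.sum_univ_two, Matrix.one_apply]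
    have hT' : ((!![1,0;-1,1] : M2 K)) * (!![1,0;1,1] : M2 K) = 1 := by
      ext i j
      fin_cases i <;> fin_cases j <;>
        simp [Matrix.mul_apply, Fin.sum_univ_two, Matrix.one_apply]
    set τu : (M2 K)ˣ := ⟨!![1,0;1,1], !![1,0;-1,1], hT, hT'⟩ with hτdef
    have hτmem : (↑τu : M2 K) ∈ stdOrder O K := by
      intro i j
      fin_cases i <;> fin_cases j <;> simp [hτdef] <;>
        first
        | exact zero_mem ((algebraMap O K).range)
        | exact one_mem ((algebraMap O K).range)
    have hτinv : (↑τu⁻¹ : M2 K) = !![1,0;-1,1] := rfl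
    have hτmem' : (↑τu⁻¹ : M2 K) ∈ stdOrder O K := by
      rw [hτinv]
      intro i j
      fin_cases i <;> fin_cases j <;> simp <;>
        first
        | exact zero_mem ((algebraMap O K).range)
        | exact one_mem ((algebraMap O K).range)
        | exact neg_mem (one_mem ((algebraMap O K).range))
    have hτ : x ∈ conjOrder O K (g * τu * Hunit hπ r) (stdOrder O K) := by
      have hk := key 0 r (Nat.zero_le _) le_rfl τu hτmem hτmem'
      rwa [Hunit_zero, mul_one] at hk
    have hYt : ϖ ^ r ∣ (Y 1 0 - Y 0 0 + Y 1 1 - Y 0 1) := by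
      have hent := mem_conjOrder.mp hτ
      have heq : (↑(g * τu * Hunit hπ r)⁻¹ : M2 K) * x * ↑(g * τu * Hunit hπ r)
          = Hmat' (algebraMap O K ϖ) r * ((!![1,0;-1,1] : M2 K) * Y.map (algebraMap O K)
            * (!![1,0;1,1] : M2 K)) * Hmat (algebraMap O K ϖ) r := by
        rw [_root_.mul_inv_rev, _root_.mul_inv_rev, Units.val_mul, Units.val_mul,
          Units.val_mul, Units.val_mul, Hunit_inv_val, Hunit_val, hτinv]
        rw [show (↑τu : M2 K) = !![1,0;1,1] from rfl]
        rw [show Hmat' (algebraMap O K ϖ) r * ((!![1,0;-1,1] : M2 K) * (↑g⁻¹ : M2 K)) * x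
            * ((↑g : M2 K) * (!![1,0;1,1] : M2 K) * Hmat (algebraMap O K ϖ) r)
          = Hmat' (algebraMap O K ϖ) r * ((!![1,0;-1,1] : M2 K)
              * ((↑g⁻¹ : M2 K) * x * (↑g : M2 K)) * (!![1,0;1,1] : M2 K))
            * Hmat (algebraMap O K ϖ) r by noncomm_ring]
        rw [hY]
      rw [heq] at hent
      have h10 := hent 1 0
      rw [Hmat, Hmat', Matrix.mul_diagonal, Matrix.diagonal_mul] at h10
      simp only [Matrix.cons_val_zero, Matrix.cons_val_one, Matrix.head_cons, mul_one] at h10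
      have htr : ((!![1,0;-1,1] : M2 K) * Y.map (algebraMap O K)
          * (!![1,0;1,1] : M2 K)) 1 0
          = algebraMap O K (Y 1 0 - Y 0 0 + Y 1 1 - Y 0 1) := by
        simp [Matrix.mul_apply, Fin.sum_univ_two, Matrix.map_apply, Matrix.vecMul,
          dotProduct, Matrix.vecHead, Matrix.vecTail, map_sub, map_add]
        ring
      rw [htr] at h10
      exact dvd_of_inv_pow_mul_mem hϖ.ne_zero h10
    have hYdiag : ϖ ^ r ∣ Y 0 0 - Y 1 1 := by
      have hcomb : Y 0 0 - Y 1 1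
          = Y 1 0 - Y 0 1 - (Y 1 0 - Y 0 0 + Y 1 1 - Y 0 1) := by ring
      rw [hcomb]
      exact dvd_sub (dvd_sub hY10r hY01) hYt
    -- decomposition
    obtain ⟨e00, he00⟩ := hYdiag
    obtain ⟨e01, he01⟩ := hY01
    obtain ⟨e10, he10⟩ := hY10
    set E₀ : Matrix (Fin 2) (Fin 2) O := !![e00, e01; ϖ ^ n * e10, 0] with hE₀def
    obtain ⟨s, hs⟩ : ∃ s : O, s = Y 1 1 := ⟨Y 1 1, rfl⟩
    have hYdecO : Y = s • (1 : Matrix (Fin 2) (Fin 2) O) + (ϖ ^ r) • E₀ := by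
      ext i j
      fin_cases i <;> fin_cases j <;>
        simp [hE₀def, hs, Matrix.smul_apply, Matrix.one_apply, smul_eq_mul]
      · linear_combination he00
      · linear_combination he01
      · linear_combination he10 + e10 * pow_add ϖ n r
    have hone : ((1 : Matrix (Fin 2) (Fin 2) O)).map (algebraMap O K) = (1 : M2 K) :=
      Matrix.map_one _ (map_zero _) (_root_.map_one _)
    have hx_conj : x = (↑g : M2 K) * (Y.map (algebraMap O K)) * (↑g⁻¹ : M2 K) := by
      rw [hY, conj_cancel_left]
    have hz_mem : (↑g : M2 K) * (E₀.map (algebraMap O K)) * (↑g⁻¹ : M2 K) ∈ D₁ ⊓ D₂ := by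
      refine ⟨?_, ?_⟩
      · rw [hD₁g]
        show (↑g⁻¹ : M2 K) * ((↑g : M2 K) * (E₀.map (algebraMap O K)) * (↑g⁻¹ : M2 K))
            * (↑g : M2 K) ∈ stdOrder O K
        rw [conj_cancel_right]
        exact mapMat_mem_std _
      · rw [hD₂g]
        show (↑(g * Hunit hπ n)⁻¹ : M2 K)
            * ((↑g : M2 K) * (E₀.map (algebraMap O K)) * (↑g⁻¹ : M2 K))
            * (↑(g * Hunit hπ n) : M2 K) ∈ stdOrder O K
        have heq : (↑(g * Hunit hπ n)⁻¹ : M2 K)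
              * ((↑g : M2 K) * (E₀.map (algebraMap O K)) * (↑g⁻¹ : M2 K))
              * ↑(g * Hunit hπ n)
            = Hmat' (algebraMap O K ϖ) n
              * ((↑g⁻¹ : M2 K) * ((↑g : M2 K) * (E₀.map (algebraMap O K))
                  * (↑g⁻¹ : M2 K)) * (↑g : M2 K))
              * Hmat (algebraMap O K ϖ) n := by
          rw [_root_.mul_inv_rev, Units.val_mul, Units.val_mul, Hunit_inv_val, Hunit_val]
          noncomm_ring
        rw [heq, conj_cancel_right]
        intro i j
        rw [Hmat, Hmat', Matrix.mul_diagonal, Matrix.diagonal_mul]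
        fin_cases i <;> fin_cases j <;>
          simp only [Fin.zero_eta, Fin.mk_one, Matrix.cons_val_zero, Matrix.cons_val_one,
            Matrix.head_cons, one_mul, mul_one, Matrix.map_apply]
        · exact ⟨_, rfl⟩
        · exact mul_mem ⟨_, rfl⟩ ⟨ϖ ^ n, by rw [map_pow]⟩
        · exact inv_pow_mul_mem_of_dvd (by rw [hE₀def]; simp) hϖ.ne_zero
        · rw [show ((algebraMap O K ϖ) ^ n)⁻¹ * algebraMap O K (E₀ 1 1)
              * (algebraMap O K ϖ) ^ n
            = algebraMap O K (E₀ 1 1) * (((algebraMap O K ϖ) ^ n)⁻¹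
              * (algebraMap O K ϖ) ^ n) by ring]
          rw [inv_mul_cancel₀ (pow_ne_zero n hπ), mul_one]
          exact ⟨_, rfl⟩
    have hx_eq : x = s • (1 : M2 K)
        + (ϖ ^ r) • ((↑g : M2 K) * (E₀.map (algebraMap O K)) * (↑g⁻¹ : M2 K)) := by
      rw [hx_conj, hYdecO,
        Matrix.map_add _ (fun a b => map_add (algebraMap O K) a b),
        Aux6.map_smul', Aux6.map_smul', hone]
      rw [mul_add, add_mul]
      congr 1
      · rw [Matrix.mul_smul, Matrix.smul_mul, mul_one, Units.mul_inv, algebraMap_smul]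
      · rw [Matrix.mul_smul, Matrix.smul_mul, algebraMap_smul]
    rw [SetLike.mem_coe, hx_eq, shrinkMod]
    refine Submodule.add_mem_sup ?_ ?_
    · exact Submodule.smul_mem _ _ (Submodule.mem_span_singleton_self 1)
    · exact Submodule.smul_mem_smul (Ideal.mem_span_singleton_self _) hz_mem

end Statements

end
end

section
/- Let K be a nonarchimedean local field, L/K a quadratic field extension, and Λ ⊆ M₂(K) a K-subalgebra isomorphic as K-algebra to L, with ring of integers O_Λ (a discrete valuation ring) and uniformizer π_Λ. Let B be a full order in M₂(K) with O_Λ ⊆ B. Then every full order B' with O_Λ ⊆ B' ⊆ B has the form B' = O_Λ + π_Λ^r·B for some integer r ≥ 0. -/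
noncomputable section

section Statements

variable (O : Type) [CommRing O] [IsDomain O] [IsDiscreteValuationRing O]
  [IsAdicComplete (IsLocalRing.maximalIdeal O) O]
  [Finite (IsLocalRing.ResidueField O)]
  (K : Type) [Field K] [Algebra O K] [IsFractionRing O K]

set_option maxHeartbeats 4000000 in
set_option synthInstance.maxHeartbeats 400000 in
/-- Every full order `B'` between `O_Λ` and a full order `B`
has the form `B' = O_Λ + π_Λ^r·B`. -/
theorem suborders_containing_quadratic_integers
    (L : Type) [Field L] [Algebra O L] [Algebra K L] [IsScalarTower O K L]
    (hquad : Module.finrank K L = 2)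
    (Λ : Subalgebra K (M2 K)) (e : ↥Λ ≃ₐ[K] L)
    (πΛ : M2 K) (hπΛ : IsUniformizerOf O K Λ πΛ)
    (B : Subalgebra O (M2 K)) (hB : IsFullOrder O K B)
    (hΛB : integralElems O K Λ ⊆ (B : Set (M2 K)))
    (B' : Subalgebra O (M2 K)) (hB' : IsFullOrder O K B')
    (hΛB' : integralElems O K Λ ⊆ (B' : Set (M2 K))) (hBB : B' ≤ B) :
    ∃ r : ℕ, Subalgebra.toSubmodule B'
      = Submodule.span O (integralElems O K Λ) ⊔
          Submodule.map (LinearMap.mulLeft O (πΛ ^ r)) (Subalgebra.toSubmodule B) := by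
  classical
  set A : Set (M2 K) := integralElems O K Λ with hAdef
  -- basic facts about Λ
  have hπΛΛ : πΛ ∈ Λ := hπΛ.1.1
  have hcomm : ∀ x ∈ Λ, ∀ y ∈ Λ, x * y = y * x := by
    intro x hx y hy
    have : (⟨x, hx⟩ * ⟨y, hy⟩ : Λ) = ⟨y, hy⟩ * ⟨x, hx⟩ :=
      e.injective (by rw [map_mul, map_mul, mul_comm])
    exact congrArg Subtype.val this
  have hinv : ∀ x ∈ Λ, x ≠ 0 → ∃ y ∈ Λ, x * y = 1 ∧ y * x = 1 := by
    intro x hx hx0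
    have hz : e ⟨x, hx⟩ ≠ 0 := by
      intro h
      apply hx0
      have := e.injective (h.trans (map_zero e).symm)
      exact congrArg Subtype.val this
    refine ⟨(e.symm (e ⟨x, hx⟩)⁻¹ : Λ), (e.symm (e ⟨x, hx⟩)⁻¹).2, ?_, ?_⟩
    · have : (⟨x, hx⟩ : Λ) * e.symm (e ⟨x, hx⟩)⁻¹ = 1 := by
        apply e.injective
        rw [map_mul, map_one, AlgEquiv.apply_symm_apply, mul_inv_cancel₀ hz]
      exact congrArg Subtype.val this
    · have : e.symm (e ⟨x, hx⟩)⁻¹ * (⟨x, hx⟩ : Λ) = 1 := by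
        apply e.injective
        rw [map_mul, map_one, AlgEquiv.apply_symm_apply, inv_mul_cancel₀ hz]
      exact congrArg Subtype.val this
  have hcancel : ∀ x ∈ Λ, x ≠ 0 → ∀ y z : M2 K, x * y = x * z → y = z := by
    intro x hx hx0 y z h
    obtain ⟨w, hw, -, hwx⟩ := hinv x hx hx0
    calc y = (w * x) * y := by rw [hwx, one_mul]
    _ = w * (x * z) := by rw [mul_assoc, h]
    _ = (w * x) * z := by rw [mul_assoc]
    _ = z := by rw [hwx, one_mul]
  -- integral elements = Λ ∩ B' = Λ ∩ B
  have hAI' : ∀ x : M2 K, x ∈ A ↔ x ∈ Λ ∧ x ∈ B' := by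
    intro x
    constructor
    · exact fun h => ⟨h.1, hΛB' h⟩
    · exact fun ⟨h1, h2⟩ => ⟨h1, IsIntegral.of_mem_of_fg B' hB'.1 x h2⟩
  have hAI : ∀ x : M2 K, x ∈ A ↔ x ∈ Λ ∧ x ∈ B := by
    intro x
    constructor
    · exact fun h => ⟨h.1, hΛB h⟩
    · exact fun ⟨h1, h2⟩ => ⟨h1, IsIntegral.of_mem_of_fg B hB.1 x h2⟩
  have hAΛ : ∀ x ∈ A, x ∈ Λ := fun x hx => hx.1
  have hA0 : (0 : M2 K) ∈ A := (hAI' 0).mpr ⟨zero_mem _, zero_mem _⟩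
  have hA1 : (1 : M2 K) ∈ A := (hAI' 1).mpr ⟨one_mem _, one_mem _⟩
  have hAadd : ∀ x ∈ A, ∀ y ∈ A, x + y ∈ A := by
    intro x hx y hy
    exact (hAI' _).mpr ⟨add_mem ((hAI' x).mp hx).1 ((hAI' y).mp hy).1,
      add_mem ((hAI' x).mp hx).2 ((hAI' y).mp hy).2⟩
  have hAmul : ∀ x ∈ A, ∀ y ∈ A, x * y ∈ A := by
    intro x hx y hy
    exact (hAI' _).mpr ⟨mul_mem ((hAI' x).mp hx).1 ((hAI' y).mp hy).1,
      mul_mem ((hAI' x).mp hx).2 ((hAI' y).mp hy).2⟩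
  have hAsmul : ∀ (o : O), ∀ x ∈ A, o • x ∈ A := by
    intro o x hx
    refine (hAI' _).mpr ⟨?_, Subalgebra.smul_mem B' ((hAI' x).mp hx).2 o⟩
    rw [← algebraMap_smul K o x]
    exact Λ.smul_mem ((hAI' x).mp hx).1 _
  have hπA : πΛ ∈ A := hπΛ.1
  have hApow : ∀ n : ℕ, πΛ ^ n ∈ A := by
    intro n
    induction n with
    | zero => simpa using hA1
    | succ n ih => rw [pow_succ]; exact hAmul _ ih _ hπA
  -- common denominator into B
  have hden : ∀ x : M2 K, ∃ d : O, d ≠ 0 ∧ d • x ∈ B := by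
    intro x
    have hx : x ∈ Submodule.span K (B : Set (M2 K)) := hB.2 ▸ Submodule.mem_top
    induction hx using Submodule.span_induction with
    | mem y hy => exact ⟨1, one_ne_zero, by simpa using hy⟩
    | zero => exact ⟨1, one_ne_zero, by simpa using B.zero_mem⟩
    | add y z hy hz ihy ihz =>
      obtain ⟨d1, hd1, hd1m⟩ := ihy
      obtain ⟨d2, hd2, hd2m⟩ := ihz
      refine ⟨d1 * d2, mul_ne_zero hd1 hd2, ?_⟩
      rw [smul_add]
      refine add_mem ?_ ?_
      · rw [mul_comm, mul_smul]; exact Subalgebra.smul_mem B hd1m d2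
      · rw [mul_smul]; exact Subalgebra.smul_mem B hd2m d1
    | smul k y hy ihy =>
      obtain ⟨d, hd, hdm⟩ := ihy
      obtain ⟨⟨n, m⟩, hnm⟩ := IsLocalization.surj (nonZeroDivisors O) k
      dsimp only at hnm
      refine ⟨d * m, mul_ne_zero hd (nonZeroDivisors.ne_zero m.2), ?_⟩
      have key : (d * (m : O)) • (k • y) = n • (d • y) := by
        rw [← algebraMap_smul K (d * (m : O) : O), ← algebraMap_smul K n (d • y),
          ← algebraMap_smul K d y, smul_smul, smul_smul]
        congr 1
        rw [map_mul, mul_assoc, mul_comm ((algebraMap O K) (m : O)) k, hnm, mul_comm]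
      rw [key]
      exact Subalgebra.smul_mem B hdm n
  -- finrank facts
  haveI hLfin : FiniteDimensional K L := FiniteDimensional.of_finrank_pos (by omega)
  haveI : FiniteDimensional K ↥Λ := Module.Finite.equiv e.toLinearEquiv.symm
  have hΛrank : Module.finrank K ↥Λ = 2 := e.toLinearEquiv.finrank_eq.trans hquad
  have hM2rank : Module.finrank K (M2 K) = 4 := by
    rw [Module.finrank_matrix]
    simp
  have hΛne : Subalgebra.toSubmodule Λ ≠ (⊤ : Submodule K (M2 K)) := by
    intro h
    have h2 : Module.finrank K ↥(Subalgebra.toSubmodule Λ) = 2 := hΛrank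
    rw [h, finrank_top, hM2rank] at h2
    omega
  -- full orders are not inside Λ
  have hnotsub : ∀ C : Subalgebra O (M2 K), IsFullOrder O K C →
      ∃ x ∈ C, x ∉ Λ := by
    intro C hC
    by_contra h
    push_neg at h
    apply hΛne
    rw [eq_top_iff, ← hC.2]
    exact Submodule.span_le.mpr fun x hx => h x hx
  obtain ⟨x₀, hx₀B', hx₀Λ⟩ := hnotsub B' hB'
  have hx₀B : x₀ ∈ B := hBB hx₀B'
  -- decomposition M₂(K) = Λ + Λ·x₀
  have hdec : ∀ m : M2 K, ∃ a b, a ∈ Λ ∧ b ∈ Λ ∧ m = a + b * x₀ := by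
    set f : ↥(Subalgebra.toSubmodule Λ) →ₗ[K] M2 K :=
      (LinearMap.mulRight K x₀).comp (Subalgebra.toSubmodule Λ).subtype with hf
    have hker : LinearMap.ker f = ⊥ := by
      rw [LinearMap.ker_eq_bot']
      intro b hb
      have hb' : (b : M2 K) * x₀ = 0 := hb
      by_contra hbne
      have hbv : (b : M2 K) ≠ 0 := fun h => hbne (Subtype.ext h)
      obtain ⟨y, hy, -, hyx⟩ := hinv (b : M2 K) b.2 hbv
      apply hx₀Λ
      have : x₀ = y * ((b : M2 K) * x₀) := by rw [← mul_assoc, hyx, one_mul]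
      rw [this, hb', mul_zero]
      exact zero_mem _
    have hfinj : Function.Injective f := LinearMap.ker_eq_bot.mp hker
    have hdisj : Subalgebra.toSubmodule Λ ⊓ LinearMap.range f = ⊥ := by
      rw [eq_bot_iff]
      rintro y ⟨hy1, b, rfl⟩
      by_contra hbne
      have hbv : (b : M2 K) ≠ 0 := by
        intro h
        apply hbne
        show f b ∈ (⊥ : Submodule K (M2 K))
        have : f b = (b : M2 K) * x₀ := rfl
        rw [this, h, zero_mul]
        exact zero_mem _
      obtain ⟨y, hy, -, hyx⟩ := hinv (b : M2 K) b.2 hbv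
      apply hx₀Λ
      have hfb : f b = (b : M2 K) * x₀ := rfl
      have : x₀ = y * f b := by rw [hfb, ← mul_assoc, hyx, one_mul]
      rw [this]
      exact mul_mem hy hy1
    have hrank2 : Module.finrank K ↥(LinearMap.range f) = 2 := by
      rw [LinearMap.finrank_range_of_inj hfinj]
      exact hΛrank
    have hsup : Subalgebra.toSubmodule Λ ⊔ LinearMap.range f = ⊤ := by
      apply Submodule.eq_top_of_finrank_eq
      have := Submodule.finrank_sup_add_finrank_inf_eq (Subalgebra.toSubmodule Λ)
        (LinearMap.range f)
      rw [hdisj, finrank_bot, add_zero] at this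
      rw [this, hM2rank]
      rw [hrank2]
      exact congrArg (· + 2) hΛrank
    intro m
    have hm : m ∈ Subalgebra.toSubmodule Λ ⊔ LinearMap.range f := hsup ▸ Submodule.mem_top
    obtain ⟨a, ha, z, ⟨b, rfl⟩, rfl⟩ := Submodule.mem_sup.mp hm
    exact ⟨a, b, ha, b.2, rfl⟩
  -- uniqueness of decomposition
  have huniq : ∀ a b a' b' : M2 K, a ∈ Λ → b ∈ Λ → a' ∈ Λ → b' ∈ Λ →
      a + b * x₀ = a' + b' * x₀ → a = a' ∧ b = b' := by
    intro a b a' b' ha hb ha' hb' heq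
    have hbb : b = b' := by
      by_contra hne
      obtain ⟨y, hy, -, hyx⟩ := hinv (b - b') (sub_mem hb hb') (sub_ne_zero.mpr hne)
      apply hx₀Λ
      have h1 : (b - b') * x₀ = a' - a := by
        calc (b - b') * x₀ = (a + b * x₀) - (a + b' * x₀) := by rw [sub_mul]; abel
        _ = (a' + b' * x₀) - (a + b' * x₀) := by rw [heq]
        _ = a' - a := by abel
      have : x₀ = y * ((b - b') * x₀) := by rw [← mul_assoc, hyx, one_mul]
      rw [this, h1]
      exact mul_mem hy (sub_mem ha' ha)
    refine ⟨?_, hbb⟩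
    have := heq
    rw [hbb] at this
    exact add_right_cancel this
  -- every nonzero integral element is a unit times a power of the uniformizer
  have hVlem : ∀ b ∈ A, b ≠ 0 → ∃ (r : ℕ) (u v : M2 K), u ∈ A ∧ v ∈ A ∧ u * v = 1 ∧
      b = πΛ ^ r * u := by
    intro b hbA hb0
    by_contra hbad
    push_neg at hbad
    -- construct an infinite divisibility chain
    have key : ∀ n : ℕ, ∃ c, c ∈ A ∧ b = πΛ ^ n * c ∧ ¬ ∃ y ∈ A, c * y = 1 := by
      intro n
      induction n with
      | zero =>
        refine ⟨b, hbA, by rw [pow_zero, one_mul], ?_⟩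
        rintro ⟨y, hy, hby⟩
        exact hbad 0 b y hbA hy hby (by rw [pow_zero, one_mul])
      | succ n ih =>
        obtain ⟨c, hcA, hbc, hcnu⟩ := ih
        rcases hπΛ.2.2 c hcA with hunit | ⟨y, hyA, hcy⟩
        · exact absurd hunit hcnu
        · refine ⟨y, hyA, by rw [hbc, hcy, pow_succ, mul_assoc], ?_⟩
          rintro ⟨z, hzA, hyz⟩
          exact hbad (n + 1) y z hyA hzA hyz (by rw [hbc, hcy, pow_succ, mul_assoc])
    choose g hgA hgb hgnu using key
    -- relation between consecutive terms
    have hπ0 : πΛ ≠ 0 := by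
      intro h
      apply hb0
      rw [hgb 1, h, pow_one, zero_mul]
    have hπpow : ∀ n : ℕ, πΛ ^ n ≠ 0 := by
      intro n
      induction n with
      | zero => simp
      | succ n ih =>
        intro h
        rw [pow_succ] at h
        exact hπ0 (hcancel _ (Λ.pow_mem hπΛΛ n) ih _ _ (by rw [mul_zero, h]))
    have hg0 : ∀ n, g n ≠ 0 := by
      intro n h
      apply hb0
      rw [hgb n, h, mul_zero]
    have hrel : ∀ n, g n = πΛ * g (n + 1) := by
      intro n
      apply hcancel (πΛ ^ n) (Λ.pow_mem hπΛΛ n) (hπpow n)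
      rw [← hgb n, ← mul_assoc, ← pow_succ, ← hgb (n + 1)]
    -- the ascending chain of modules A · g n
    have hN : ∀ n : ℕ, ∃ N : Submodule O (M2 K), ∀ x, x ∈ N ↔ ∃ a ∈ A, x = a * g n := by
      intro n
      refine ⟨{ carrier := {x | ∃ a ∈ A, x = a * g n}
                add_mem' := ?_
                zero_mem' := ⟨0, hA0, (zero_mul _).symm⟩
                smul_mem' := ?_ }, fun x => Iff.rfl⟩
      · rintro x y ⟨a, ha, rfl⟩ ⟨a', ha', rfl⟩
        exact ⟨a + a', hAadd a ha a' ha', (add_mul _ _ _).symm⟩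
      · rintro o x ⟨a, ha, rfl⟩
        exact ⟨o • a, hAsmul o a ha, (smul_mul_assoc o a (g n)).symm⟩
    choose N hNmem using hN
    have hNmono : ∀ n, N n ≤ N (n + 1) := by
      intro n x hx
      obtain ⟨a, ha, rfl⟩ := (hNmem n x).mp hx
      refine (hNmem (n + 1) _).mpr ⟨a * πΛ, hAmul a ha πΛ hπA, ?_⟩
      rw [hrel n, mul_assoc]
    haveI : IsNoetherian O ↥(Subalgebra.toSubmodule B') :=
      isNoetherian_of_fg_of_noetherian _ hB'.1
    set fchain : ℕ →o Submodule O ↥(Subalgebra.toSubmodule B') :=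
      ⟨fun n => (N n).comap (Subalgebra.toSubmodule B').subtype,
        fun n m hnm => Submodule.comap_mono ((monotone_nat_of_le_succ hNmono) hnm)⟩ with hfchain
    obtain ⟨n, hn⟩ := monotone_stabilizes_iff_noetherian.mpr inferInstance fchain
    have hmem1 : g (n + 1) ∈ B' := hΛB' (hgA (n + 1))
    have hgn1 : (⟨g (n + 1), hmem1⟩ : ↥(Subalgebra.toSubmodule B')) ∈ fchain (n + 1) := by
      show g (n + 1) ∈ N (n + 1)
      exact (hNmem (n + 1) _).mpr ⟨1, hA1, (one_mul _).symm⟩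
    have hgn2 : g (n + 1) ∈ N n := by
      have := hn (n + 1) (Nat.le_succ n)
      rw [← this] at hgn1
      exact hgn1
    obtain ⟨a, haA, hg1⟩ := (hNmem n _).mp hgn2
    -- derive a contradiction: πΛ would be a unit in A
    obtain ⟨μ, hμΛ, hgμ, -⟩ := hinv (g (n + 1)) (hAΛ _ (hgA (n + 1))) (hg0 (n + 1))
    have hfix : g (n + 1) = (a * πΛ) * g (n + 1) := by
      conv_lhs => rw [hg1, hrel n, ← mul_assoc]
    have h1 : (1 : M2 K) = a * πΛ := by
      calc (1 : M2 K) = g (n + 1) * μ := hgμ.symm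
      _ = ((a * πΛ) * g (n + 1)) * μ := by rw [← hfix]
      _ = (a * πΛ) * (g (n + 1) * μ) := by rw [mul_assoc]
      _ = a * πΛ := by rw [hgμ, mul_one]
    exact hπΛ.2.1 ⟨a, haA, by rw [hcomm πΛ hπΛΛ a (hAΛ a haA), ← h1]⟩
  -- principal generation of "ideals" of A
  have hPlem : ∀ I : Set (M2 K), I ⊆ A → (∀ a ∈ A, ∀ x ∈ I, a * x ∈ I) →
      (∃ x ∈ I, x ≠ 0) →
      ∃ γ ∈ I, γ ≠ 0 ∧ ∀ x, x ∈ I ↔ ∃ c ∈ A, x = c * γ := by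
    intro I hIA hImul ⟨w, hwI, hw0⟩
    set P' : ℕ → Prop := fun r => ∃ x ∈ I, ∃ u v : M2 K, u ∈ A ∧ v ∈ A ∧ u * v = 1 ∧
      x = πΛ ^ r * u with hP'
    have hP'ex : ∃ r, P' r := by
      obtain ⟨r, u, v, hu, hv, huv, hx⟩ := hVlem w (hIA hwI) hw0
      exact ⟨r, w, hwI, u, v, hu, hv, huv, hx⟩
    set r₀ := Nat.find hP'ex with hr₀
    obtain ⟨γ, hγI, u₀, v₀, hu₀, hv₀, hu₀v₀, hγeq⟩ := Nat.find_spec hP'ex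
    -- πΛ ^ r₀ ≠ 0
    have hπr₀ : πΛ ^ r₀ ≠ 0 := by
      intro hz
      obtain ⟨r, u, v, hu, hv, huv, hx⟩ := hVlem w (hIA hwI) hw0
      have hrge : r₀ ≤ r := Nat.find_min' hP'ex ⟨w, hwI, u, v, hu, hv, huv, hx⟩
      apply hw0
      rw [hx, ← Nat.sub_add_cancel hrge, pow_add, hz, mul_zero, zero_mul]
    have hγ0 : γ ≠ 0 := by
      intro hz
      apply hπr₀
      have : γ * v₀ = πΛ ^ r₀ * (u₀ * v₀) := by rw [hγeq, mul_assoc]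
      rw [hz, zero_mul, hu₀v₀, mul_one] at this
      exact this.symm
    refine ⟨γ, hγI, hγ0, fun x => ⟨?_, ?_⟩⟩
    · intro hxI
      by_cases hx0 : x = 0
      · exact ⟨0, hA0, by rw [hx0, zero_mul]⟩
      obtain ⟨r, u, v, hu, hv, huv, hx⟩ := hVlem x (hIA hxI) hx0
      have hrge : r₀ ≤ r := Nat.find_min' hP'ex ⟨x, hxI, u, v, hu, hv, huv, hx⟩
      refine ⟨πΛ ^ (r - r₀) * (u * v₀), hAmul _ (hApow _) _ (hAmul u hu v₀ hv₀), ?_⟩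
      have hvu : v₀ * u₀ = 1 := by
        rw [hcomm v₀ (hAΛ _ hv₀) u₀ (hAΛ _ hu₀)]
        exact hu₀v₀
      have step1 : (u * v₀) * (πΛ ^ r₀ * u₀) = πΛ ^ r₀ * u := by
        calc (u * v₀) * (πΛ ^ r₀ * u₀) = ((u * v₀) * πΛ ^ r₀) * u₀ := (mul_assoc _ _ _).symm
        _ = (πΛ ^ r₀ * (u * v₀)) * u₀ := by
            rw [hcomm (u * v₀) (mul_mem (hAΛ _ hu) (hAΛ _ hv₀)) (πΛ ^ r₀) (Λ.pow_mem hπΛΛ r₀)]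
        _ = πΛ ^ r₀ * (u * (v₀ * u₀)) := by rw [mul_assoc (πΛ ^ r₀), mul_assoc u]
        _ = πΛ ^ r₀ * u := by rw [hvu, mul_one]
      calc x = πΛ ^ r * u := hx
      _ = πΛ ^ (r - r₀) * (πΛ ^ r₀ * u) := by
          rw [← mul_assoc, ← pow_add, Nat.sub_add_cancel hrge]
      _ = πΛ ^ (r - r₀) * ((u * v₀) * (πΛ ^ r₀ * u₀)) := by rw [step1]
      _ = (πΛ ^ (r - r₀) * (u * v₀)) * (πΛ ^ r₀ * u₀) := (mul_assoc _ _ _).symm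
      _ = (πΛ ^ (r - r₀) * (u * v₀)) * γ := by rw [← hγeq]
    · rintro ⟨c, hcA, rfl⟩
      exact hImul c hcA γ hγI
  have hΛsmulO : ∀ (o : O), ∀ x ∈ Λ, o • x ∈ Λ := by
    intro o x hx
    rw [← algebraMap_smul K o x]
    exact Λ.smul_mem hx _
  have hAB : ∀ x ∈ A, x ∈ B := fun x hx => hΛB hx
  have hAB' : ∀ x ∈ A, x ∈ B' := fun x hx => hΛB' hx
  have hdK : ∀ d : O, d ≠ 0 → algebraMap O K d ≠ 0 := by
    intro d hd0 h
    exact hd0 (IsFractionRing.injective O K (by rw [h, map_zero]))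
  -- the sets of second coordinates of B and B'
  set TB : Set (M2 K) := {b | b ∈ Λ ∧ ∃ m ∈ B, ∃ a ∈ Λ, m = a + b * x₀} with hTBdef
  set TB' : Set (M2 K) := {b | b ∈ Λ ∧ ∃ m ∈ B', ∃ a ∈ Λ, m = a + b * x₀} with hTB'def
  have hTBmul : ∀ a ∈ A, ∀ b ∈ TB, a * b ∈ TB := by
    rintro a ha b ⟨hbΛ, m, hmB, a₁, ha₁, hmeq⟩
    refine ⟨mul_mem (hAΛ a ha) hbΛ, a * m, mul_mem (hAB a ha) hmB, a * a₁,
      mul_mem (hAΛ a ha) ha₁, ?_⟩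
    rw [hmeq, mul_add, mul_assoc]
  have hTB'mul : ∀ a ∈ A, ∀ b ∈ TB', a * b ∈ TB' := by
    rintro a ha b ⟨hbΛ, m, hmB, a₁, ha₁, hmeq⟩
    refine ⟨mul_mem (hAΛ a ha) hbΛ, a * m, mul_mem (hAB' a ha) hmB, a * a₁,
      mul_mem (hAΛ a ha) ha₁, ?_⟩
    rw [hmeq, mul_add, mul_assoc]
  have hTB'sub : TB' ⊆ TB := by
    rintro b ⟨hbΛ, m, hmB, a₁, ha₁, hmeq⟩
    exact ⟨hbΛ, m, hBB hmB, a₁, ha₁, hmeq⟩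
  have hTB'ne : ∃ b ∈ TB', b ≠ 0 := by
    by_contra h
    push_neg at h
    obtain ⟨x₁, hx₁B', hx₁Λ⟩ := hnotsub B' hB'
    apply hx₁Λ
    obtain ⟨a, b, ha, hb, heq⟩ := hdec x₁  -- before choose
    have hbT : b ∈ TB' := ⟨hb, x₁, hx₁B', a, ha, heq⟩
    rw [heq, h b hbT, zero_mul, add_zero]
    exact ha
  -- common denominator for TB
  obtain ⟨S, hS⟩ := hB.1
  choose af bf haf hbf heqf using hdec
  have hdec2 : ∀ m : M2 K, ∃ a b, a ∈ Λ ∧ b ∈ Λ ∧ m = a + b * x₀ :=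
    fun m => ⟨af m, bf m, haf m, hbf m, heqf m⟩
  choose df hdf0 hdfB using fun s : M2 K => hden (bf s)
  set d : O := ∏ s ∈ S, df s with hd
  have hd0 : d ≠ 0 := Finset.prod_ne_zero_iff.mpr fun s _ => hdf0 s
  have hddef : ∀ b ∈ TB, d • b ∈ A := by
    have hQ : ∀ m ∈ Subalgebra.toSubmodule B,
        ∃ a b, a ∈ Λ ∧ b ∈ Λ ∧ m = a + b * x₀ ∧ d • b ∈ A := by
      intro m hm
      rw [← hS] at hm
      induction hm using Submodule.span_induction with
      | mem s hs =>
        refine ⟨af s, bf s, haf s, hbf s, heqf s, ?_⟩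
        rw [hd, ← Finset.prod_erase_mul S df (Finset.mem_coe.mp hs), mul_smul]
        exact hAsmul _ _ ((hAI _).mpr ⟨hΛsmulO _ _ (hbf s), hdfB s⟩)
      | zero => exact ⟨0, 0, zero_mem _, zero_mem _, by simp, by rw [smul_zero]; exact hA0⟩
      | add y z hy hz ihy ihz =>
        obtain ⟨a1, b1, ha1, hb1, he1, hd1⟩ := ihy
        obtain ⟨a2, b2, ha2, hb2, he2, hd2⟩ := ihz
        refine ⟨a1 + a2, b1 + b2, add_mem ha1 ha2, add_mem hb1 hb2, ?_, ?_⟩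
        · rw [he1, he2, add_mul]; abel
        · rw [smul_add]; exact hAadd _ hd1 _ hd2
      | smul o y hy ihy =>
        obtain ⟨a1, b1, ha1, hb1, he1, hd1⟩ := ihy
        refine ⟨o • a1, o • b1, hΛsmulO o _ ha1, hΛsmulO o _ hb1, ?_, ?_⟩
        · rw [he1, smul_add, smul_mul_assoc]
        · rw [smul_comm]; exact hAsmul o _ hd1
    rintro b ⟨hbΛ, m, hmB, a₁, ha₁, hmeq⟩
    obtain ⟨a', b', ha', hb', he', hd'⟩ := hQ m hmB
    obtain ⟨-, hbb⟩ := huniq a₁ b a' b' ha₁ hbΛ ha' hb' (by rw [← hmeq, ← he'])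
    rw [hbb]
    exact hd'
  -- principal generators for the coordinate modules
  set IB : Set (M2 K) := (fun b => d • b) '' TB with hIBdef
  set IB' : Set (M2 K) := (fun b => d • b) '' TB' with hIB'def
  have hsmul_ne : ∀ b : M2 K, b ≠ 0 → d • b ≠ 0 := by
    intro b hb0 h
    apply hb0
    have h2 : (algebraMap O K d) • b = 0 := by rw [algebraMap_smul]; exact h
    have h3 : b = (algebraMap O K d)⁻¹ • ((algebraMap O K d) • b) :=
      (inv_smul_smul₀ (hdK d hd0) b).symm
    rw [h3, h2, smul_zero]
  have hIBP : ∃ γ ∈ IB, γ ≠ 0 ∧ ∀ x, x ∈ IB ↔ ∃ c ∈ A, x = c * γ := by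
    apply hPlem
    · rintro x ⟨b, hb, rfl⟩; exact hddef b hb
    · rintro a ha x ⟨b, hb, rfl⟩
      exact ⟨a * b, hTBmul a ha b hb, (mul_smul_comm d a b).symm⟩
    · obtain ⟨b, hb, hb0⟩ := hTB'ne
      exact ⟨d • b, ⟨b, hTB'sub hb, rfl⟩, hsmul_ne b hb0⟩
  have hIB'P : ∃ γ ∈ IB', γ ≠ 0 ∧ ∀ x, x ∈ IB' ↔ ∃ c ∈ A, x = c * γ := by
    apply hPlem
    · rintro x ⟨b, hb, rfl⟩; exact hddef b (hTB'sub hb)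
    · rintro a ha x ⟨b, hb, rfl⟩
      exact ⟨a * b, hTB'mul a ha b hb, (mul_smul_comm d a b).symm⟩
    · obtain ⟨b, hb, hb0⟩ := hTB'ne
      exact ⟨d • b, ⟨b, hb, rfl⟩, hsmul_ne b hb0⟩
  obtain ⟨γ, hγIB, hγ0, hγiff⟩ := hIBP
  obtain ⟨γ', hγ'IB', hγ'0, hγ'iff⟩ := hIB'P
  have hIB'sub : IB' ⊆ IB := Set.image_mono hTB'sub
  obtain ⟨c₀, hc₀A, hγ'c⟩ := (hγiff γ').mp (hIB'sub hγ'IB')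
  have hc₀0 : c₀ ≠ 0 := by
    intro h
    apply hγ'0
    rw [hγ'c, h, zero_mul]
  obtain ⟨r, u, v, huA, hvA, huv, hc₀eq⟩ := hVlem c₀ hc₀A hc₀0
  -- β and β'
  set dK : K := algebraMap O K d with hdKdef
  have hdK0 : dK ≠ 0 := hdK d hd0
  set β : M2 K := dK⁻¹ • γ with hβdef
  set β' : M2 K := dK⁻¹ • γ' with hβ'def
  have hrecover : ∀ b : M2 K, dK⁻¹ • (d • b) = b := by
    intro b
    rw [← algebraMap_smul K d b, ← hdKdef, inv_smul_smul₀ hdK0]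
  have hβiff : ∀ b, b ∈ TB ↔ ∃ c ∈ A, b = c * β := by
    intro b
    constructor
    · intro hb
      obtain ⟨c, hc, hcb⟩ := (hγiff (d • b)).mp ⟨b, hb, rfl⟩
      exact ⟨c, hc, by rw [← hrecover b, hcb, mul_smul_comm]⟩
    · rintro ⟨c, hc, rfl⟩
      obtain ⟨t, ht, hteq⟩ := (hγiff (c * γ)).mpr ⟨c, hc, rfl⟩
      have : c * β = t := by
        rw [hβdef, mul_smul_comm, ← hteq, hrecover]
      rw [this]
      exact ht
  have hβ'iff : ∀ b, b ∈ TB' ↔ ∃ c ∈ A, b = c * β' := by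
    intro b
    constructor
    · intro hb
      obtain ⟨c, hc, hcb⟩ := (hγ'iff (d • b)).mp ⟨b, hb, rfl⟩
      exact ⟨c, hc, by rw [← hrecover b, hcb, mul_smul_comm]⟩
    · rintro ⟨c, hc, rfl⟩
      obtain ⟨t, ht, hteq⟩ := (hγ'iff (c * γ')).mpr ⟨c, hc, rfl⟩
      have : c * β' = t := by
        rw [hβ'def, mul_smul_comm, ← hteq, hrecover]
      rw [this]
      exact ht
  have hβ'c₀β : β' = c₀ * β := by
    rw [hβ'def, hγ'c, hβdef, mul_smul_comm]
  obtain ⟨hβΛ, xB, hxBB, aB, haBΛ, hxBeq⟩ := (hβiff β).mpr ⟨1, hA1, (one_mul β).symm⟩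
  obtain ⟨hβ'Λ, xB', hxB'B', aB', haB'Λ, hxB'eq⟩ := (hβ'iff β').mpr ⟨1, hA1, (one_mul β').symm⟩
  -- structure of B and B' over A
  have structB : ∀ m ∈ B, ∃ a c, a ∈ A ∧ c ∈ A ∧ m = a + c * xB := by
    intro m hm
    obtain ⟨a, b, ha, hb, heq⟩ := hdec2 m
    obtain ⟨c, hcA, hbc⟩ := (hβiff b).mp ⟨hb, m, hm, a, ha, heq⟩
    have hcxB : c * xB = c * aB + b * x₀ := by
      rw [hxBeq, mul_add, ← mul_assoc, ← hbc]
    have hsub : m - c * xB = a - c * aB := by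
      rw [heq, hcxB]; abel
    have hsubΛ : m - c * xB ∈ Λ := by
      rw [hsub]; exact sub_mem ha (mul_mem (hAΛ c hcA) haBΛ)
    have hsubB : m - c * xB ∈ B := sub_mem hm (mul_mem (hAB c hcA) hxBB)
    exact ⟨m - c * xB, c, (hAI _).mpr ⟨hsubΛ, hsubB⟩, hcA, by rw [sub_add_cancel]⟩
  have structB' : ∀ m ∈ B', ∃ a c, a ∈ A ∧ c ∈ A ∧ m = a + c * xB' := by
    intro m hm
    obtain ⟨a, b, ha, hb, heq⟩ := hdec2 m
    obtain ⟨c, hcA, hbc⟩ := (hβ'iff b).mp ⟨hb, m, hm, a, ha, heq⟩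
    have hcxB : c * xB' = c * aB' + b * x₀ := by
      rw [hxB'eq, mul_add, ← mul_assoc, ← hbc]
    have hsub : m - c * xB' = a - c * aB' := by
      rw [heq, hcxB]; abel
    have hsubΛ : m - c * xB' ∈ Λ := by
      rw [hsub]; exact sub_mem ha (mul_mem (hAΛ c hcA) haB'Λ)
    have hsubB : m - c * xB' ∈ B' := sub_mem hm (mul_mem (hAB' c hcA) hxB'B')
    exact ⟨m - c * xB', c, (hAI' _).mpr ⟨hsubΛ, hsubB⟩, hcA, by rw [sub_add_cancel]⟩
  -- the element δ
  set δ : M2 K := xB' - πΛ ^ r * (u * xB) with hδdef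
  have hπruβ : πΛ ^ r * (u * β) = β' := by
    rw [← mul_assoc, ← hc₀eq, ← hβ'c₀β]
  have hexp : πΛ ^ r * (u * xB) = πΛ ^ r * (u * aB) + β' * x₀ := by
    rw [hxBeq, mul_add, mul_add]
    congr 1
    rw [← mul_assoc u β x₀, ← mul_assoc (πΛ ^ r) (u * β) x₀, hπruβ]
  have hδΛ : δ ∈ Λ := by
    have : δ = aB' - πΛ ^ r * (u * aB) := by
      rw [hδdef, hexp, hxB'eq]; abel
    rw [this]
    exact sub_mem haB'Λ (mul_mem (Λ.pow_mem hπΛΛ r) (mul_mem (hAΛ u huA) haBΛ))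
  have hδB : δ ∈ B := by
    exact sub_mem (hBB hxB'B') (mul_mem (hAB _ (hApow r)) (mul_mem (hAB u huA) hxBB))
  have hδA : δ ∈ A := (hAI δ).mpr ⟨hδΛ, hδB⟩
  have hxB'eq2 : xB' = δ + πΛ ^ r * (u * xB) := by rw [hδdef, sub_add_cancel]
  -- final assembly
  refine ⟨r, le_antisymm ?_ ?_⟩
  · intro m hm
    obtain ⟨a, c, haA, hcA, hmeq⟩ := structB' m ((Subalgebra.mem_toSubmodule _).mp hm)
    have hmain : m = (a + c * δ) + πΛ ^ r * (c * (u * xB)) := by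
      rw [hmeq, hxB'eq2, mul_add, ← add_assoc]
      congr 1
      rw [← mul_assoc c (πΛ ^ r) (u * xB),
        hcomm c (hAΛ c hcA) (πΛ ^ r) (Λ.pow_mem hπΛΛ r), mul_assoc]
    refine Submodule.mem_sup.mpr ⟨a + c * δ, ?_, πΛ ^ r * (c * (u * xB)), ?_, hmain.symm⟩
    · exact Submodule.subset_span (hAadd a haA _ (hAmul c hcA δ hδA))
    · exact Submodule.mem_map.mpr ⟨c * (u * xB),
        (Subalgebra.mem_toSubmodule _).mpr (mul_mem (hAB c hcA) (mul_mem (hAB u huA) hxBB)), rfl⟩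
  · apply sup_le
    · exact Submodule.span_le.mpr fun x hx => hΛB' hx
    · rintro x ⟨bb, hbb, rfl⟩
      show πΛ ^ r * bb ∈ B'
      obtain ⟨a, c, haA, hcA, hbbeq⟩ := structB bb ((Subalgebra.mem_toSubmodule _).mp hbb)
      have hv1 : v * (πΛ ^ r * u) = πΛ ^ r := by
        calc v * (πΛ ^ r * u) = (v * πΛ ^ r) * u := (mul_assoc _ _ _).symm
        _ = (πΛ ^ r * v) * u := by rw [hcomm v (hAΛ v hvA) (πΛ ^ r) (Λ.pow_mem hπΛΛ r)]
        _ = πΛ ^ r * (v * u) := mul_assoc _ _ _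
        _ = πΛ ^ r * (u * v) := by rw [hcomm v (hAΛ v hvA) u (hAΛ u huA)]
        _ = πΛ ^ r := by rw [huv, mul_one]
      have hkey : πΛ ^ r * (c * xB) = (c * v) * (xB' - δ) := by
        have hsub : xB' - δ = πΛ ^ r * (u * xB) := by rw [hδdef]; abel
        rw [hsub]
        calc πΛ ^ r * (c * xB) = (πΛ ^ r * c) * xB := (mul_assoc _ _ _).symm
        _ = (c * πΛ ^ r) * xB := by rw [hcomm c (hAΛ c hcA) (πΛ ^ r) (Λ.pow_mem hπΛΛ r)]
        _ = c * (πΛ ^ r * xB) := mul_assoc _ _ _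
        _ = c * ((v * (πΛ ^ r * u)) * xB) := by rw [hv1]
        _ = c * (v * ((πΛ ^ r * u) * xB)) := by rw [mul_assoc v]
        _ = c * (v * (πΛ ^ r * (u * xB))) := by rw [mul_assoc (πΛ ^ r)]
        _ = (c * v) * (πΛ ^ r * (u * xB)) := (mul_assoc _ _ _).symm
      have : πΛ ^ r * bb = πΛ ^ r * a + (c * v) * (xB' - δ) := by
        rw [hbbeq, mul_add, hkey]
      rw [this]
      refine add_mem (mul_mem (hAB' _ (hApow r)) (hAB' a haA)) ?_
      exact mul_mem (mul_mem (hAB' c hcA) (hAB' v hvA))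
        (sub_mem hxB'B' (hAB' δ hδA))


end Statements

end
end
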